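/- arXiv:0811.1522 — 5 statements merged into one kernel-verified Lean document; each statement's English description precedes it below -/
import Mathlib

section
/- Let k be a field, G a finite group, and M a finite-dimensional kG-module that is indecomposable and not semisimple. Suppose M is self-dual, i.e. M is isomorphic as a kG-module to its dual M* = Hom_k(M, k) equipped with the contragredient action (g·f)(m) = f(g⁻¹·m). Let I be a simple kG-submodule of M that is self-dual (I ≅ I* with the contragredient action). Then the multiplicity of I as a composition factor of M is at least 2; that is, every composition series of M has at least two factors isomorphic to I. -/
section Aux

variable {R M N : Type*} [Ring R] [AddCommGroup M] [Module R M]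
  [AddCommGroup N] [Module R N]

namespace JordanHolderModule

def Iso (X Y : Submodule R M × Submodule R M) : Prop :=
  Nonempty <| (X.2 ⧸ X.1.comap X.2.subtype) ≃ₗ[R] Y.2 ⧸ Y.1.comap Y.2.subtype

theorem iso_symm {X Y : Submodule R M × Submodule R M} : Iso X Y → Iso Y X :=
  fun ⟨f⟩ => ⟨f.symm⟩

theorem second_iso {X Y : Submodule R M} (_ : X ⋖ X ⊔ Y) :
    Iso (X, X ⊔ Y) (X ⊓ Y, Y) := by
  constructor
  rw [sup_comm, inf_comm]
  dsimp
  exact (LinearMap.quotientInfEquivSupQuotient Y X).symm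

end JordanHolderModule

def Fac (N : Type*) [AddCommGroup N] [Module R N] (p q : Submodule R M) : Prop :=
  Nonempty ((↥q ⧸ (Submodule.comap q.subtype p)) ≃ₗ[R] N)

theorem fac_of_iso {p q p' q' : Submodule R M}
    (h : JordanHolderModule.Iso (p, q) (p', q')) (hf : Fac N p' q') : Fac N p q := by
  obtain ⟨e⟩ := h; obtain ⟨e'⟩ := hf; exact ⟨e.trans e'⟩

theorem fac_quot_of_le_of_lt [IsSimpleModule R N] {A C J : Submodule R M}
    (h : Fac N A J) (hAC : A ≤ C) (hCJ : C < J) : Fac N C J := by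
  obtain ⟨e⟩ := h
  have hle : Submodule.comap J.subtype A ≤ Submodule.comap J.subtype C :=
    Submodule.comap_mono hAC
  let π : (↥J ⧸ Submodule.comap J.subtype A) →ₗ[R] (↥J ⧸ Submodule.comap J.subtype C) :=
    Submodule.mapQ _ _ LinearMap.id (by simpa using hle)
  have hπ : Function.Surjective π := by
    intro x
    obtain ⟨y, rfl⟩ := Submodule.Quotient.mk_surjective _ x
    exact ⟨Submodule.Quotient.mk y, by simp [π, Submodule.mapQ_apply]⟩
  have hnt : Nontrivial (↥J ⧸ Submodule.comap J.subtype C) := by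
    refine Submodule.Quotient.nontrivial_iff.2 ?_
    intro htop
    exact absurd (Submodule.comap_subtype_eq_top.1 htop) (not_le_of_gt hCJ)
  set φ : N →ₗ[R] (↥J ⧸ Submodule.comap J.subtype C) := π ∘ₗ (e.symm : N →ₗ[R] _)
  have hφs : Function.Surjective φ := hπ.comp e.symm.surjective
  rcases eq_bot_or_eq_top (LinearMap.ker φ) with hker | hker
  · exact ⟨(LinearEquiv.ofBijective φ ⟨LinearMap.ker_eq_bot.1 hker, hφs⟩).symm⟩
  · exfalso
    have hφ0 : φ = 0 := LinearMap.ker_eq_top.1 hker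
    obtain ⟨x, y, hxy⟩ := hnt.exists_pair_ne
    obtain ⟨a, rfl⟩ := hφs x
    obtain ⟨b, rfl⟩ := hφs y
    simp [hφ0] at hxy

/-- bottom version: a copy of `N` sitting just above the head produces a factor. -/
theorem fac_exists_bot [IsSimpleModule R N] (s : CompositionSeries (Submodule R M)) :
    ∀ (n : ℕ) (hn : n ≤ s.length) (J : Submodule R M), s.head < J →
      J ≤ s ⟨n, by omega⟩ → Fac N s.head J →
      ∃ i : Fin s.length, i.1 < n ∧ Fac N (s i.castSucc) (s i.succ) := by
  intro n
  induction n with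
  | zero =>
    intro hn J h1 h2 _
    have h0 : (⟨0, by omega⟩ : Fin (s.length + 1)) = 0 := Fin.ext (by simp)
    rw [h0] at h2
    exact absurd (lt_of_lt_of_le h1 h2) (lt_irrefl _)
  | succ n ih =>
    intro hn J h1 h2 hF
    set i : Fin s.length := ⟨n, by omega⟩ with hi
    have hival : (i : ℕ) = n := rfl
    have hcov : s i.castSucc ⋖ s i.succ := s.step i
    by_cases hJP : J ≤ s i.castSucc
    · obtain ⟨j, hj, hFj⟩ := ih (by omega) J h1 hJP hF
      exact ⟨j, by omega, hFj⟩
    · refine ⟨i, by omega, ?_⟩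
      have hPlt : s i.castSucc < s i.castSucc ⊔ J := left_lt_sup.2 hJP
      have hsup : s i.castSucc ⊔ J = s i.succ := by
        rcases lt_or_eq_of_le (sup_le (le_of_lt hcov.1) (h2 : J ≤ s i.succ)) with h | h
        · exact absurd h (hcov.2 hPlt)
        · exact h
      have hiso : JordanHolderModule.Iso (s i.castSucc, s i.succ)
          ((s i.castSucc) ⊓ J, J) := by
        have := JordanHolderModule.second_iso (X := s i.castSucc) (Y := J) (hsup ▸ hcov)
        rwa [hsup] at this
      refine fac_of_iso hiso ?_
      refine fac_quot_of_le_of_lt hF (le_inf (s.head_le _) (le_of_lt h1)) ?_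
      exact lt_of_le_of_ne inf_le_right (fun h => hJP (h ▸ inf_le_left))

/-- top version: a copy of `N` as a top factor of `s ⟨n⟩` produces a factor. -/
theorem fac_exists_top [IsSimpleModule R N] (s : CompositionSeries (Submodule R M)) :
    ∀ (n : ℕ) (hn : n ≤ s.length) (K : Submodule R M), s.head ≤ K →
      K ⋖ s ⟨n, by omega⟩ → Fac N K (s ⟨n, by omega⟩) →
      ∃ i : Fin s.length, i.1 < n ∧ Fac N (s i.castSucc) (s i.succ) := by
  intro n
  induction n with
  | zero =>
    intro hn K h1 h2 _
    have h0 : (⟨0, by omega⟩ : Fin (s.length + 1)) = 0 := Fin.ext (by simp)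
    rw [h0] at h2
    exact absurd (lt_of_le_of_lt h1 h2.1) (lt_irrefl _)
  | succ n ih =>
    intro hn K h1 h2 hF
    set i : Fin s.length := ⟨n, by omega⟩ with hi
    have hival : (i : ℕ) = n := rfl
    have hcov : s i.castSucc ⋖ s i.succ := s.step i
    by_cases hKP : K = s i.castSucc
    · exact ⟨i, by omega, hKP ▸ hF⟩
    · have hPK : ¬ s i.castSucc ≤ K := by
        intro hle
        rcases lt_or_eq_of_le hle with h | h
        · exact hcov.2 h (h2.1 : K < s i.succ)
        · exact hKP h.symm
      have hKlt : K < K ⊔ s i.castSucc := left_lt_sup.2 hPK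
      have hsup : K ⊔ s i.castSucc = s i.succ := by
        rcases lt_or_eq_of_le (sup_le (le_of_lt h2.1) (le_of_lt hcov.1)) with h | h
        · exact absurd h (h2.2 hKlt)
        · exact h
      have hiso : JordanHolderModule.Iso (K, s i.succ)
          (K ⊓ s i.castSucc, s i.castSucc) := by
        have := JordanHolderModule.second_iso (X := K) (Y := s i.castSucc) (hsup ▸ h2)
        rwa [hsup] at this
      have hF' : Fac N (K ⊓ s i.castSucc) (s i.castSucc) :=
        fac_of_iso (JordanHolderModule.iso_symm hiso) hF
      have hcov' : K ⊓ s i.castSucc ⋖ s i.castSucc := by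
        have h1' : K ⋖ K ⊔ s i.castSucc := hsup ▸ h2
        have h2' : s i.castSucc ⋖ K ⊔ s i.castSucc := hsup ▸ hcov
        have := inf_covBy_of_covBy_sup_of_covBy_sup_left
          (a := s i.castSucc) (b := K) (by rwa [sup_comm]) (by rwa [sup_comm])
        rwa [inf_comm] at this
      obtain ⟨j, hj, hFj⟩ := ih (by omega) (K ⊓ s i.castSucc)
        (le_inf h1 (s.head_le _)) hcov' hF'
      exact ⟨j, by omega, hFj⟩

/-- main version: copies of `N` at bottom and top, nested, produce two factors. -/
theorem fac_exists_two [IsSimpleModule R N] (s : CompositionSeries (Submodule R M)) :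
    ∀ (n : ℕ) (hn : n ≤ s.length) (J K : Submodule R M), s.head < J → J ≤ K →
      K ⋖ s ⟨n, by omega⟩ → Fac N s.head J → Fac N K (s ⟨n, by omega⟩) →
      ∃ i j : Fin s.length, i.1 < n ∧ j.1 < n ∧ i ≠ j ∧
        Fac N (s i.castSucc) (s i.succ) ∧ Fac N (s j.castSucc) (s j.succ) := by
  intro n
  induction n with
  | zero =>
    intro hn J K h1 h2 h3 _ _
    have h0 : (⟨0, by omega⟩ : Fin (s.length + 1)) = 0 := Fin.ext (by simp)
    rw [h0] at h3
    exact absurd (lt_of_lt_of_le (lt_of_lt_of_le h1 h2) (le_of_lt h3.1)) (lt_irrefl _)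
  | succ n ih =>
    intro hn J K h1 h2 h3 hFb hFt
    set i : Fin s.length := ⟨n, by omega⟩ with hi
    have hival : (i : ℕ) = n := rfl
    have hcov : s i.castSucc ⋖ s i.succ := s.step i
    by_cases hKP : K = s i.castSucc
    · -- top factor at index i, plus a bottom factor strictly below
      obtain ⟨j, hj, hFj⟩ := fac_exists_bot s n (by omega) J h1 (hKP ▸ h2) hFb
      exact ⟨i, j, by omega, by omega, by
        intro h; rw [← h] at hj; omega, hKP ▸ hFt, hFj⟩
    · have hPK : ¬ s i.castSucc ≤ K := by
        intro hle
        rcases lt_or_eq_of_le hle with h | h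
        · exact hcov.2 h (h3.1 : K < s i.succ)
        · exact hKP h.symm
      have hKlt : K < K ⊔ s i.castSucc := left_lt_sup.2 hPK
      have hsup : K ⊔ s i.castSucc = s i.succ := by
        rcases lt_or_eq_of_le (sup_le (le_of_lt h3.1) (le_of_lt hcov.1)) with h | h
        · exact absurd h (h3.2 hKlt)
        · exact h
      have hiso : JordanHolderModule.Iso (K, s i.succ)
          (K ⊓ s i.castSucc, s i.castSucc) := by
        have := JordanHolderModule.second_iso (X := K) (Y := s i.castSucc) (hsup ▸ h3)
        rwa [hsup] at this
      have hF' : Fac N (K ⊓ s i.castSucc) (s i.castSucc) :=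
        fac_of_iso (JordanHolderModule.iso_symm hiso) hFt
      have hcov' : K ⊓ s i.castSucc ⋖ s i.castSucc := by
        have h1' : K ⋖ K ⊔ s i.castSucc := hsup ▸ h3
        have h2' : s i.castSucc ⋖ K ⊔ s i.castSucc := hsup ▸ hcov
        have := inf_covBy_of_covBy_sup_of_covBy_sup_left
          (a := s i.castSucc) (b := K) (by rwa [sup_comm]) (by rwa [sup_comm])
        rwa [inf_comm] at this
      by_cases hJP : J ≤ s i.castSucc
      · obtain ⟨a, b, ha, hb, hab, hFa, hFb'⟩ := ih (by omega) J (K ⊓ s i.castSucc)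
          h1 (le_inf h2 hJP) hcov' hFb hF'
        exact ⟨a, b, by omega, by omega, hab, hFa, hFb'⟩
      · -- top factor at i comes from J; another factor below from K ⊓ P
        have hPlt : s i.castSucc < s i.castSucc ⊔ J := left_lt_sup.2 hJP
        have hsupJ : s i.castSucc ⊔ J = s i.succ := by
          rcases lt_or_eq_of_le (sup_le (le_of_lt hcov.1)
            (le_trans h2 (le_of_lt h3.1))) with h | h
          · exact absurd h (hcov.2 hPlt)
          · exact h
        have hisoJ : JordanHolderModule.Iso (s i.castSucc, s i.succ)
            ((s i.castSucc) ⊓ J, J) := by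
          have := JordanHolderModule.second_iso (X := s i.castSucc) (Y := J) (hsupJ ▸ hcov)
          rwa [hsupJ] at this
        have hFi : Fac N (s i.castSucc) (s i.succ) := by
          refine fac_of_iso hisoJ ?_
          refine fac_quot_of_le_of_lt hFb (le_inf (s.head_le _) (le_of_lt h1)) ?_
          exact lt_of_le_of_ne inf_le_right (fun h => hJP (h ▸ inf_le_left))
        obtain ⟨j, hj, hFj⟩ := fac_exists_top s n (by omega) (K ⊓ s i.castSucc)
          (le_inf (le_of_lt (lt_of_lt_of_le h1 h2)) (s.head_le _)) hcov' hF'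
        exact ⟨i, j, by omega, by omega, by
          intro h; rw [← h] at hj; omega, hFi, hFj⟩

end Aux


section RepAux

variable {k G V W : Type*} [Field k] [Group G]
  [AddCommGroup V] [Module k V] [AddCommGroup W] [Module k W]

/-- Promote an equivariant `k`-linear map to a `MonoidAlgebra k G`-linear map between
the associated modules. -/
noncomputable def equivariantToModuleHom (ρ : Representation k G V) (σ : Representation k G W)
    (f : V →ₗ[k] W) (hf : ∀ (g : G) (v : V), f (ρ g v) = σ g (f v)) :
    ρ.asModule →ₗ[MonoidAlgebra k G] σ.asModule where
  toFun := f
  map_add' := f.map_add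
  map_smul' := fun r v => by
    show f (ρ.asAlgebraHom r v) = σ.asAlgebraHom r (f v)
    induction r using MonoidAlgebra.induction_linear with
    | zero => exact f.map_zero
    | add a b ha hb =>
      rw [map_add, map_add]
      show f (ρ.asAlgebraHom a v + ρ.asAlgebraHom b v) = _
      rw [map_add, ha, hb]; rfl
    | single g a =>
      simp only [Representation.asAlgebraHom_single, LinearMap.smul_apply, map_smul]
      exact (f.map_smul a _).trans (congrArg (a • ·) (hf g v))

theorem equivariantToModuleHom_apply (ρ : Representation k G V) (σ : Representation k G W)
    (f : V →ₗ[k] W) (hf : ∀ (g : G) (v : V), f (ρ g v) = σ g (f v)) (v : V) :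
    equivariantToModuleHom ρ σ f hf v = f v := rfl

end RepAux

/-- Let `k` be a field, `G` a finite group, and `M` a finite-dimensional `kG`-module
(given by a representation `ρ` of `G` on `V`, with `M = ρ.asModule` the corresponding
module over the group algebra `MonoidAlgebra k G`) which is indecomposable and not
semisimple.  Suppose `M` is self-dual, i.e. there is a `k`-linear isomorphism of `V` with
its dual `Hom_k(V, k)` intertwining `ρ` with the contragredient representation `ρ.dual`.
Let `I` be a simple self-dual `kG`-submodule of `M` (given by a representation `σ` of `G`
on `W` together with an injective `G`-equivariant `k`-linear map `ι : W →ₗ[k] V`).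
Then the multiplicity of `I` as a composition factor of `M` is at least `2`: every
composition series of `M` has at least two factors isomorphic to `I`. -/
theorem selfdual_simple_submodule_multiplicity_ge_two
    (k G V W : Type*) [Field k] [Group G] [Finite G]
    [AddCommGroup V] [Module k V] [FiniteDimensional k V]
    [AddCommGroup W] [Module k W]
    (ρ : Representation k G V) (σ : Representation k G W)
    -- `M` is nonzero and indecomposable …
    (hM_nontrivial : Nontrivial V)
    (hM_indec : ∀ p q : Submodule (MonoidAlgebra k G) ρ.asModule,
      IsCompl p q → p = ⊥ ∨ q = ⊥)
    -- … and not semisimple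
    (hM_not_ss : ¬ IsSemisimpleModule (MonoidAlgebra k G) ρ.asModule)
    -- `M` is self-dual (with the contragredient action on the dual)
    (hM_selfdual : ∃ e : V ≃ₗ[k] Module.Dual k V,
      ∀ (g : G) (v : V), e (ρ g v) = ρ.dual g (e v))
    -- `I` is simple …
    (hI_simple : IsSimpleModule (MonoidAlgebra k G) σ.asModule)
    -- … self-dual …
    (hI_selfdual : ∃ e : W ≃ₗ[k] Module.Dual k W,
      ∀ (g : G) (w : W), e (σ g w) = σ.dual g (e w))
    -- … and a submodule of `M`
    (ι : W →ₗ[k] V) (hι_inj : Function.Injective ι)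
    (hι_equivariant : ∀ (g : G) (w : W), ι (σ g w) = ρ g (ι w)) :
    -- every composition series of `M` has at least two factors isomorphic to `I`
    ∀ s : CompositionSeries (Submodule (MonoidAlgebra k G) ρ.asModule),
      s.head = ⊥ → s.last = ⊤ →
      ∃ i j : Fin s.length, i ≠ j ∧
        Nonempty ((↥(s i.succ) ⧸
            (Submodule.comap (s i.succ).subtype (s i.castSucc)))
          ≃ₗ[MonoidAlgebra k G] σ.asModule) ∧
        Nonempty ((↥(s j.succ) ⧸
            (Submodule.comap (s j.succ).subtype (s j.castSucc)))
          ≃ₗ[MonoidAlgebra k G] σ.asModule) := by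
  intro s hhead hlast
  haveI := hI_simple
  obtain ⟨eM, heM⟩ := hM_selfdual
  obtain ⟨eW, heW⟩ := hI_selfdual
  -- the inclusion as a module map
  let ι' : σ.asModule →ₗ[MonoidAlgebra k G] ρ.asModule :=
    equivariantToModuleHom σ ρ ι (fun g w => hι_equivariant g w)
  have hι'_inj : Function.Injective ι' := hι_inj
  -- the projection `M → I` obtained from self-duality
  let q₀ : V →ₗ[k] W :=
    (eW.symm : Module.Dual k W →ₗ[k] W) ∘ₗ (ι.dualMap ∘ₗ (eM : V →ₗ[k] Module.Dual k V))
  have hq₀_eq : ∀ (g : G) (v : V), q₀ (ρ g v) = σ g (q₀ v) := by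
    intro g v
    have h1 : ι.dualMap (ρ.dual g (eM v)) = σ.dual g (ι.dualMap (eM v)) := by
      ext w
      simp only [LinearMap.dualMap_apply, Representation.dual_apply,
        Module.Dual.transpose_apply, LinearMap.coe_comp, Function.comp_apply]
      rw [← hι_equivariant]
    have h2 : ∀ x, eW.symm (σ.dual g x) = σ g (eW.symm x) := by
      intro x
      apply eW.injective
      rw [heW, eW.apply_symm_apply, eW.apply_symm_apply]
    simp only [q₀, LinearMap.coe_comp, LinearEquiv.coe_coe, Function.comp_apply]
    rw [heM, h1, h2]
  have hq₀_surj : Function.Surjective q₀ := by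
    have hd : Function.Surjective ι.dualMap :=
      LinearMap.dualMap_surjective_of_injective hι_inj
    exact eW.symm.surjective.comp (hd.comp eM.surjective)
  let Q : ρ.asModule →ₗ[MonoidAlgebra k G] σ.asModule := equivariantToModuleHom ρ σ q₀ hq₀_eq
  have hQ_surj : Function.Surjective Q := hq₀_surj
  have hNnt : Nontrivial σ.asModule := IsSimpleModule.nontrivial (MonoidAlgebra k G) σ.asModule
  have hJne : LinearMap.range ι' ≠ ⊥ := by
    intro h
    rw [LinearMap.range_eq_bot] at h
    obtain ⟨x, hx⟩ := exists_ne (0 : σ.asModule)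
    exact hx (hι'_inj (by simp [h]))
  by_cases hle : LinearMap.range ι' ≤ LinearMap.ker Q
  · -- main case: `I ⊆ ker Q`, two factors
    have hl : s ⟨s.length, by omega⟩ = (⊤ : Submodule (MonoidAlgebra k G) ρ.asModule) := by
      rw [← hlast]; rfl
    have hcoatom : LinearMap.ker Q ⋖ (⊤ : Submodule (MonoidAlgebra k G) ρ.asModule) :=
      (LinearMap.isCoatom_ker_of_surjective hQ_surj).covBy_top
    have hFb : Fac σ.asModule s.head (LinearMap.range ι') := by
      rw [hhead]
      have e1 : (↥(LinearMap.range ι') ⧸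
          (Submodule.comap (LinearMap.range ι').subtype
            (⊥ : Submodule (MonoidAlgebra k G) ρ.asModule)))
          ≃ₗ[MonoidAlgebra k G] ↥(LinearMap.range ι') :=
        Submodule.quotEquivOfEqBot _ (by simp)
      exact ⟨e1.trans (LinearEquiv.ofInjective ι' hι'_inj).symm⟩
    have hFt : Fac σ.asModule (LinearMap.ker Q) (s ⟨s.length, by omega⟩) := by
      rw [hl]
      have hmap : Submodule.map
          ((Submodule.topEquiv : (⊤ : Submodule (MonoidAlgebra k G) ρ.asModule)
            ≃ₗ[MonoidAlgebra k G] ρ.asModule) :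
              (⊤ : Submodule (MonoidAlgebra k G) ρ.asModule) →ₗ[MonoidAlgebra k G] ρ.asModule)
          (Submodule.comap (⊤ : Submodule (MonoidAlgebra k G) ρ.asModule).subtype
            (LinearMap.ker Q)) = LinearMap.ker Q := by
        ext x
        simp only [Submodule.mem_map, Submodule.mem_comap, Submodule.coe_subtype,
          LinearEquiv.coe_coe, Submodule.topEquiv_apply]
        constructor
        · rintro ⟨y, hy, rfl⟩; exact hy
        · intro hx; exact ⟨⟨x, trivial⟩, hx, rfl⟩
      have e3 := Submodule.Quotient.equiv
        (Submodule.comap (⊤ : Submodule (MonoidAlgebra k G) ρ.asModule).subtype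
          (LinearMap.ker Q)) (LinearMap.ker Q) Submodule.topEquiv hmap
      exact ⟨e3.trans (Q.quotKerEquivOfSurjective hQ_surj)⟩
    obtain ⟨i, j, _, _, hij, hFi, hFj⟩ :=
      fac_exists_two (N := σ.asModule) s s.length le_rfl
        (LinearMap.range ι') (LinearMap.ker Q)
        (by rw [hhead]; exact bot_lt_iff_ne_bot.2 hJne)
        hle (by rw [hl]; exact hcoatom) hFb hFt
    exact ⟨i, j, hij, hFi, hFj⟩
  · -- otherwise `M` would be decomposable or simple
    exfalso
    set c : σ.asModule →ₗ[MonoidAlgebra k G] σ.asModule := Q ∘ₗ ι' with hc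
    have hc_ne : c ≠ 0 := by
      intro h
      apply hle
      rintro x ⟨y, rfl⟩
      have : c y = 0 := by rw [h]; rfl
      exact this
    have hc_bij : Function.Bijective c := c.bijective_or_eq_zero.resolve_right hc_ne
    have hdisj : LinearMap.range ι' ⊓ LinearMap.ker Q = ⊥ := by
      ext x
      simp only [Submodule.mem_inf, Submodule.mem_bot, LinearMap.mem_range, LinearMap.mem_ker]
      constructor
      · rintro ⟨⟨y, rfl⟩, hk⟩
        have hy : y = 0 := hc_bij.injective (by simpa [hc] using hk)
        simp [hy]
      · rintro rfl
        exact ⟨⟨0, map_zero _⟩, map_zero _⟩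
    have hcod : LinearMap.range ι' ⊔ LinearMap.ker Q = ⊤ := by
      rw [eq_top_iff]
      intro m _
      obtain ⟨y, hy⟩ := hc_bij.surjective (Q m)
      rw [Submodule.mem_sup]
      refine ⟨ι' y, ⟨y, rfl⟩, m - ι' y, ?_, by abel⟩
      have : Q (ι' y) = Q m := hy
      simp [LinearMap.mem_ker, map_sub, this]
    rcases hM_indec _ _ ⟨disjoint_iff.2 hdisj, codisjoint_iff.2 hcod⟩ with h | h
    · exact hJne h
    · have hQbij : Function.Bijective Q := ⟨LinearMap.ker_eq_bot.1 h, hQ_surj⟩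
      haveI : IsSimpleModule (MonoidAlgebra k G) ρ.asModule :=
        IsSimpleModule.congr (LinearEquiv.ofBijective Q hQbij)
      exact hM_not_ss (IsSemisimpleModule.mk (toComplementedLattice := ⟨fun a => (eq_bot_or_eq_top a).elim
        (fun h' => ⟨⊤, h' ▸ isCompl_bot_top⟩) (fun h' => ⟨⊥, h' ▸ isCompl_top_bot⟩)⟩))
end

section
/- Let d ≥ 4. The five groups (a) D_{2^d} × C₂, (b) the central product D_{2^d} ∘ C₄, (c) the dihedral group of order 2^{d+1}, (d) the semidihedral group SD_{2^{d+1}} = ⟨x, y ∣ x^{2^d} = y² = 1, y x y⁻¹ = x^{2^{d−1}−1}⟩, and (e) C_{2^{d−1}} ⋊ (C₂ × C₂) = ⟨s, t, e ∣ s^{2^{d−1}} = t² = e² = 1, te = et, t s t⁻¹ = s⁻¹, e s e⁻¹ = s^{2^{d−2}+1}⟩ are pairwise non-isomorphic, and each of them contains a subgroup of index 2 isomorphic to the dihedral group D_{2^d} of order 2^d. -/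
/-- The units of `ZMod q` act by multiplication; multiplicatively this gives
`(ZMod q)ˣ →* MulAut (Multiplicative (ZMod q))`. -/
def zmodUnitsToMulAut (q : ℕ) : (ZMod q)ˣ →* MulAut (Multiplicative (ZMod q)) where
  toFun u := AddEquiv.toMultiplicative (DistribMulAction.toAddAut (ZMod q)ˣ (ZMod q) u)
  map_one' := by
    ext x
    simp [AddEquiv.toMultiplicative]
  map_mul' u v := by
    ext x
    simp [AddEquiv.toMultiplicative, mul_smul]

/-- The homomorphism from the cyclic group of order `2` sending the generator to a
given element `z` with `z ^ 2 = 1`. -/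
def c2hom {G : Type*} [Group G] (z : G) (hz : z ^ 2 = 1) : Multiplicative (ZMod 2) →* G where
  toFun a := z ^ (Multiplicative.toAdd a).val
  map_one' := by simp
  map_mul' a b := by
    show z ^ (Multiplicative.toAdd (a * b)).val = _
    rw [toAdd_mul, ZMod.val_add, ← pow_eq_pow_mod _ hz, pow_add]

lemma zmod_two_pow_self (n : ℕ) : (2 : ZMod (2 ^ n)) ^ n = 0 := by
  have h := ZMod.natCast_self (2 ^ n)
  push_cast at h
  exact h

lemma sd_val_sq (d : ℕ) (hd : 2 ≤ d) :
    ((2 : ZMod (2 ^ d)) ^ (d - 1) - 1) * ((2 : ZMod (2 ^ d)) ^ (d - 1) - 1) = 1 := by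
  have h0 : (2 : ZMod (2 ^ d)) ^ d = 0 := zmod_two_pow_self d
  have e1 : ((2 : ZMod (2 ^ d)) ^ (d - 1) - 1) * ((2 : ZMod (2 ^ d)) ^ (d - 1) - 1)
      = (2 : ZMod (2 ^ d)) ^ (d - 1) * (2 : ZMod (2 ^ d)) ^ (d - 1)
        - (2 : ZMod (2 ^ d)) * (2 : ZMod (2 ^ d)) ^ (d - 1) + 1 := by ring
  have e2 : (2 : ZMod (2 ^ d)) ^ (d - 1) * (2 : ZMod (2 ^ d)) ^ (d - 1)
      = (2 : ZMod (2 ^ d)) ^ (d - 2) * (2 : ZMod (2 ^ d)) ^ d := by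
    rw [← pow_add, ← pow_add]; congr 1; omega
  have e3 : (2 : ZMod (2 ^ d)) * (2 : ZMod (2 ^ d)) ^ (d - 1) = (2 : ZMod (2 ^ d)) ^ d := by
    rw [← pow_succ']; congr 1; omega
  rw [e1, e2, e3, h0, mul_zero, sub_zero, zero_add]

/-- The unit `2^(d-1) - 1` of `ZMod (2^d)`. -/
def sdUnit (d : ℕ) (hd : 2 ≤ d) : (ZMod (2 ^ d))ˣ :=
  ⟨(2 : ZMod (2 ^ d)) ^ (d - 1) - 1, (2 : ZMod (2 ^ d)) ^ (d - 1) - 1,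
    sd_val_sq d hd, sd_val_sq d hd⟩

lemma sdUnit_sq (d : ℕ) (hd : 2 ≤ d) : (sdUnit d hd) ^ 2 = 1 := by
  ext
  rw [Units.val_pow_eq_pow_val, Units.val_one, pow_two]
  exact sd_val_sq d hd

/-- The semidihedral group of order `2^(d+1)`:
`⟨x, y ∣ x^(2^d) = y² = 1, y x y⁻¹ = x^(2^(d-1) - 1)⟩`, realized as the semidirect
product of the cyclic group of order `2^d` by the cyclic group of order `2`, the
generator of the latter acting as multiplication by `2^(d-1) - 1`. -/
abbrev SemidihedralGroup (d : ℕ) (hd : 2 ≤ d) : Type :=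
  Multiplicative (ZMod (2 ^ d)) ⋊[(zmodUnitsToMulAut (2 ^ d)).comp
    (c2hom (sdUnit d hd) (sdUnit_sq d hd))] Multiplicative (ZMod 2)

/-- Group (a): the direct product `D_{2^d} × C₂`. -/
abbrev GroupA (d : ℕ) : Type := DihedralGroup (2 ^ (d - 1)) × Multiplicative (ZMod 2)

/-- The element `(s₁, c²)` of `D_{2^d} × C₄`, where `s₁` is the central involution of the
dihedral group and `c` generates `C₄`. -/
def cpGen (d : ℕ) : DihedralGroup (2 ^ (d - 1)) × Multiplicative (ZMod 4) :=
  (DihedralGroup.r ((2 ^ (d - 2) : ℕ) : ZMod (2 ^ (d - 1))), Multiplicative.ofAdd (2 : ZMod 4))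

lemma half_add_half (d : ℕ) :
    ((2 ^ (d - 2) : ℕ) : ZMod (2 ^ (d - 1))) + ((2 ^ (d - 2) : ℕ) : ZMod (2 ^ (d - 1))) = 0 := by
  match d with
  | 0 => decide
  | 1 => decide
  | (n + 2) =>
    show ((2 ^ n : ℕ) : ZMod (2 ^ (n + 1))) + ((2 ^ n : ℕ) : ZMod (2 ^ (n + 1))) = 0
    rw [← Nat.cast_add, show 2 ^ n + 2 ^ n = 2 ^ (n + 1) by ring, ZMod.natCast_self]

lemma cpGen_mem_center (d : ℕ) :
    cpGen d ∈ Subgroup.center (DihedralGroup (2 ^ (d - 1)) × Multiplicative (ZMod 4)) := by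
  rw [Subgroup.mem_center_iff]
  rintro ⟨g, c⟩
  refine Prod.ext ?_ (mul_comm _ _)
  show g * DihedralGroup.r _ = DihedralGroup.r _ * g
  have h := half_add_half d
  cases g with
  | r j => rw [DihedralGroup.r_mul_r, DihedralGroup.r_mul_r, add_comm]
  | sr j =>
    rw [DihedralGroup.sr_mul_r, DihedralGroup.r_mul_sr]
    congr 1
    rw [eq_comm, sub_eq_iff_eq_add, add_assoc, h, add_zero]

instance cpGen_zpowers_normal (d : ℕ) : (Subgroup.zpowers (cpGen d)).Normal := by
  constructor
  intro n hn g
  obtain ⟨k, rfl⟩ := hn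
  have hc : (cpGen d) ^ k ∈
      Subgroup.center (DihedralGroup (2 ^ (d - 1)) × Multiplicative (ZMod 4)) :=
    Subgroup.zpow_mem _ (cpGen_mem_center d) k
  have h := (Subgroup.mem_center_iff.mp hc) g
  have : g * (cpGen d) ^ k * g⁻¹ = (cpGen d) ^ k := by
    rw [h, mul_assoc, mul_inv_cancel, mul_one]
  rw [this]
  exact Subgroup.zpow_mem _ (Subgroup.mem_zpowers _) k

/-- Group (b): the central product `D_{2^d} ∘ C₄`, i.e. the quotient of `D_{2^d} × C₄`
by the order-2 subgroup generated by `(s₁, c²)`. -/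
abbrev GroupB (d : ℕ) : Type :=
  (DihedralGroup (2 ^ (d - 1)) × Multiplicative (ZMod 4)) ⧸ Subgroup.zpowers (cpGen d)

lemma ge_val_sq (d : ℕ) (hd : 3 ≤ d) :
    ((2 : ZMod (2 ^ (d - 1))) ^ (d - 2) + 1) * ((2 : ZMod (2 ^ (d - 1))) ^ (d - 2) + 1) = 1 := by
  have h0 : (2 : ZMod (2 ^ (d - 1))) ^ (d - 1) = 0 := zmod_two_pow_self (d - 1)
  have e1 : ((2 : ZMod (2 ^ (d - 1))) ^ (d - 2) + 1) * ((2 : ZMod (2 ^ (d - 1))) ^ (d - 2) + 1)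
      = (2 : ZMod (2 ^ (d - 1))) ^ (d - 2) * (2 : ZMod (2 ^ (d - 1))) ^ (d - 2)
        + (2 : ZMod (2 ^ (d - 1))) * (2 : ZMod (2 ^ (d - 1))) ^ (d - 2) + 1 := by ring
  have e2 : (2 : ZMod (2 ^ (d - 1))) ^ (d - 2) * (2 : ZMod (2 ^ (d - 1))) ^ (d - 2)
      = (2 : ZMod (2 ^ (d - 1))) ^ (d - 3) * (2 : ZMod (2 ^ (d - 1))) ^ (d - 1) := by
    rw [← pow_add, ← pow_add]; congr 1; omega
  have e3 : (2 : ZMod (2 ^ (d - 1))) * (2 : ZMod (2 ^ (d - 1))) ^ (d - 2)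
      = (2 : ZMod (2 ^ (d - 1))) ^ (d - 1) := by
    rw [← pow_succ']; congr 1; omega
  rw [e1, e2, e3, h0, mul_zero, add_zero, zero_add]

/-- The unit `2^(d-2) + 1` of `ZMod (2^(d-1))`. -/
def geUnit (d : ℕ) (hd : 3 ≤ d) : (ZMod (2 ^ (d - 1)))ˣ :=
  ⟨(2 : ZMod (2 ^ (d - 1))) ^ (d - 2) + 1, (2 : ZMod (2 ^ (d - 1))) ^ (d - 2) + 1,
    ge_val_sq d hd, ge_val_sq d hd⟩

lemma geUnit_sq (d : ℕ) (hd : 3 ≤ d) : (geUnit d hd) ^ 2 = 1 := by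
  ext
  rw [Units.val_pow_eq_pow_val, Units.val_one, pow_two]
  exact ge_val_sq d hd

/-- Group (e): the semidirect product
`C_{2^(d-1)} ⋊ (C₂ × C₂) = ⟨s, t, e ∣ s^(2^(d-1)) = t² = e² = 1, te = et,
t s t⁻¹ = s⁻¹, e s e⁻¹ = s^(2^(d-2)+1)⟩`,
the first `C₂` factor (generated by `t`) acting as inversion and the second (generated
by `e`) acting as multiplication by `2^(d-2) + 1`. -/
abbrev GroupE (d : ℕ) (hd : 3 ≤ d) : Type :=
  Multiplicative (ZMod (2 ^ (d - 1))) ⋊[(zmodUnitsToMulAut (2 ^ (d - 1))).comp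
    (MonoidHom.coprod (c2hom (-1 : (ZMod (2 ^ (d - 1)))ˣ) neg_one_sq)
      (c2hom (geUnit d hd) (geUnit_sq d hd)))]
    (Multiplicative (ZMod 2) × Multiplicative (ZMod 2))




lemma card_two_pow_torsion (m k : ℕ) (hk : k ≤ m) :
    Nat.card {x : ZMod (2 ^ m) // (2 : ZMod (2 ^ m)) ^ k * x = 0} = 2 ^ k := by
  haveI : NeZero (2 ^ m) := ⟨by positivity⟩
  have key : ∀ y : ZMod (2 ^ k), ((2:ZMod (2^m)) ^ k * ((2 ^ (m - k) * y.val : ℕ) : ZMod (2^m)) = 0) := by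
    intro y
    have : ((2:ZMod (2^m)) ^ k) = ((2 ^ k : ℕ) : ZMod (2^m)) := by push_cast; ring
    rw [this, ← Nat.cast_mul, show 2 ^ k * (2 ^ (m-k) * y.val) = 2 ^ m * y.val by rw [← mul_assoc, ← pow_add]; congr 2; omega, Nat.cast_mul, ZMod.natCast_self, zero_mul]
  have e : ZMod (2 ^ k) ≃ {x : ZMod (2 ^ m) // (2 : ZMod (2 ^ m)) ^ k * x = 0} := by
    haveI : NeZero (2 ^ k) := ⟨by positivity⟩
    refine Equiv.ofBijective (fun y => ⟨((2 ^ (m - k) * y.val : ℕ) : ZMod (2^m)), key y⟩) ⟨?_, ?_⟩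
    · intro a b hab
      have h : ((2 ^ (m - k) * a.val : ℕ) : ZMod (2^m)) = ((2 ^ (m - k) * b.val : ℕ) : ZMod (2^m)) := congrArg Subtype.val hab
      rw [ZMod.natCast_eq_natCast_iff] at h
      have ha : 2 ^ (m-k) * a.val < 2 ^ m := by
        have := a.val_lt
        calc 2 ^ (m-k) * a.val < 2 ^ (m-k) * 2 ^ k := by
              exact (Nat.mul_lt_mul_left (by positivity)).2 a.val_lt
          _ = 2 ^ m := by rw [← pow_add]; congr 1; omega
      have hb : 2 ^ (m-k) * b.val < 2 ^ m := by
        calc 2 ^ (m-k) * b.val < 2 ^ (m-k) * 2 ^ k := by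
              exact (Nat.mul_lt_mul_left (by positivity)).2 b.val_lt
          _ = 2 ^ m := by rw [← pow_add]; congr 1; omega
      have := (Nat.ModEq.eq_of_lt_of_lt h ha hb)
      have : a.val = b.val := by
        have h2 : (0:ℕ) < 2 ^ (m-k) := by positivity
        exact Nat.eq_of_mul_eq_mul_left h2 this
      exact ZMod.val_injective _ this
    · rintro ⟨x, hx⟩
      have hx' : (2 ^ k * x.val : ℕ) ≡ 0 [MOD 2 ^ m] := by
        rw [← ZMod.natCast_eq_natCast_iff]
        push_cast
        rw [ZMod.natCast_val, ZMod.cast_id]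
        simpa using hx
      have hdvd : 2 ^ m ∣ 2 ^ k * x.val := (Nat.modEq_zero_iff_dvd).1 hx'
      have hdvd2 : 2 ^ (m - k) ∣ x.val := by
        rcases hdvd with ⟨t, ht⟩
        refine ⟨t, ?_⟩
        have : 2 ^ k * x.val = 2 ^ k * (2 ^ (m-k) * t) := by
          rw [ht, ← mul_assoc, ← pow_add]; congr 2; omega
        exact Nat.eq_of_mul_eq_mul_left (by positivity) this
      rcases hdvd2 with ⟨t, ht⟩
      have htlt : t < 2 ^ k := by
        have := x.val_lt
        rw [ht] at this
        by_contra hc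
        push_neg at hc
        have : 2 ^ (m-k) * 2 ^ k ≤ 2 ^ (m-k) * t := Nat.mul_le_mul_left _ hc
        rw [← pow_add, show m - k + k = m by omega] at this
        omega
      refine ⟨((t : ℕ) : ZMod (2 ^ k)), ?_⟩
      apply Subtype.ext
      simp only
      rw [ZMod.val_natCast_of_lt htlt, ← ht, ZMod.natCast_val, ZMod.cast_id]
  rw [← Nat.card_congr e]
  simp [Nat.card_eq_fintype_card]

open DihedralGroup in
def dihSqEquiv (n : ℕ) : {x : DihedralGroup n // x * x = 1} ≃ ({i : ZMod n // i + i = 0} ⊕ ZMod n) where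
  toFun x := match x with
    | ⟨r i, h⟩ => Sum.inl ⟨i, by
        rw [r_mul_r] at h
        exact DihedralGroup.r.inj (h.trans DihedralGroup.one_def)⟩
    | ⟨sr i, _⟩ => Sum.inr i
  invFun y := match y with
    | Sum.inl ⟨i, h⟩ => ⟨r i, by rw [r_mul_r, h]; rfl⟩
    | Sum.inr i => ⟨sr i, DihedralGroup.sr_mul_self i⟩
  left_inv x := by rcases x with ⟨(i | i), h⟩ <;> rfl
  right_inv y := by rcases y with (⟨i, h⟩ | i) <;> rfl

open DihedralGroup in
def dihSqEqREquiv (n : ℕ) (c : ZMod n) (hc : c ≠ 0) :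
    {x : DihedralGroup n // x * x = r c} ≃ {i : ZMod n // i + i = c} where
  toFun x := match x with
    | ⟨r i, h⟩ => ⟨i, by rw [r_mul_r] at h; exact DihedralGroup.r.inj h⟩
    | ⟨sr i, h⟩ => absurd (DihedralGroup.r.inj ((DihedralGroup.sr_mul_self i).symm.trans h : DihedralGroup.r 0 = r c)) (Ne.symm hc)
  invFun y := ⟨r y.1, by rw [r_mul_r, y.2]⟩
  left_inv x := by
    rcases x with ⟨(i | i), h⟩
    · rfl
    · exact absurd (DihedralGroup.r.inj ((DihedralGroup.sr_mul_self i).symm.trans h : DihedralGroup.r 0 = r c)) (Ne.symm hc)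
  right_inv y := rfl


def sdpSqEquiv {N G : Type*} [Group N] [Group G] (φ : G →* MulAut N)
    (hG : ∀ g : G, g * g = 1) :
    {x : N ⋊[φ] G // x * x = 1} ≃ (Σ g : G, {n : N // n * φ g n = 1}) where
  toFun x := ⟨x.1.right, x.1.left, by
    have h := congrArg SemidirectProduct.left x.2
    simpa using h⟩
  invFun y := ⟨⟨y.2.1, y.1⟩, by
    apply SemidirectProduct.ext
    · simpa using y.2.2
    · simpa using hG y.1⟩
  left_inv x := by apply Subtype.ext; apply SemidirectProduct.ext <;> rfl
  right_inv y := rfl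


lemma mem_zpowers_of_sq {G : Type*} [Group G] (z : G) (hz : z * z = 1) (g : G)
    (h : g ∈ Subgroup.zpowers z) : g = 1 ∨ g = z := by
  rw [Subgroup.mem_zpowers_iff] at h
  obtain ⟨k, rfl⟩ := h
  have h2 : z ^ (2:ℤ) = 1 := by
    rw [show (2:ℤ) = ((2:ℕ):ℤ) by norm_num, zpow_natCast, pow_two, hz]
  rcases Int.even_or_odd k with ⟨t, rfl⟩ | ⟨t, rfl⟩
  · left; rw [← two_mul, zpow_mul, h2, one_zpow]
  · right; rw [zpow_add, zpow_one, zpow_mul, h2, one_zpow, one_mul]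

noncomputable def quotSqEquiv {G : Type*} [Group G] [DecidableEq G] (z : G) (hz : z * z = 1)
    (hz1 : z ≠ 1) (hcen : z ∈ Subgroup.center G) [(Subgroup.zpowers z).Normal] :
    {x : G ⧸ Subgroup.zpowers z // x * x = 1} × Bool ≃ {g : G // g * g = 1 ∨ g * g = z} where
  toFun p := ⟨p.1.1.out * (cond p.2 z 1), by
    have hout : (QuotientGroup.mk p.1.1.out : G ⧸ Subgroup.zpowers z) = p.1.1 :=
      QuotientGroup.out_eq' _
    have h1 : p.1.1.out * p.1.1.out ∈ Subgroup.zpowers z := by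
      rw [← QuotientGroup.eq_one_iff, QuotientGroup.mk_mul, hout, p.1.2]
    have h2 := mem_zpowers_of_sq z hz _ h1
    have hw : (cond p.2 z 1) * (cond p.2 z 1) = 1 := by cases p.2 <;> simp [hz]
    have hcomm : p.1.1.out * (cond p.2 z 1) * p.1.1.out
        = p.1.1.out * p.1.1.out * (cond p.2 z 1) := by
      cases p.2
      · simp
      · simp only [cond]
        rw [mul_assoc, ← (Subgroup.mem_center_iff.1 hcen) p.1.1.out, ← mul_assoc]
    have key : p.1.1.out * (cond p.2 z 1) * (p.1.1.out * (cond p.2 z 1))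
        = p.1.1.out * p.1.1.out := by
      rw [← mul_assoc, hcomm, mul_assoc, mul_assoc, hw, mul_one]
    rw [key]; exact h2⟩
  invFun g := (⟨QuotientGroup.mk g.1, by
      rw [← QuotientGroup.mk_mul]
      rcases g.2 with h | h
      · rw [h]; rfl
      · rw [h, QuotientGroup.eq_one_iff]
        exact Subgroup.mem_zpowers z⟩,
    decide (g.1 ≠ (QuotientGroup.mk g.1 : G ⧸ Subgroup.zpowers z).out))
  left_inv p := by
    obtain ⟨⟨x, hx⟩, b⟩ := p
    have hout : (QuotientGroup.mk x.out : G ⧸ Subgroup.zpowers z) = x := QuotientGroup.out_eq' _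
    have hmkw : (QuotientGroup.mk (x.out * cond b z 1) : G ⧸ Subgroup.zpowers z) = x := by
      cases b
      · simpa using hout
      · rw [QuotientGroup.mk_mul, hout]
        have : (QuotientGroup.mk z : G ⧸ Subgroup.zpowers z) = 1 :=
          (QuotientGroup.eq_one_iff z).2 (Subgroup.mem_zpowers z)
        simp [this]
    refine Prod.ext (Subtype.ext ?_) ?_
    · exact hmkw
    · simp only [hmkw]
      cases b
      · simp
      · simp only [cond]
        rw [decide_eq_true_eq]
        intro h
        exact hz1 (mul_left_cancel (h.trans (mul_one x.out).symm))
  right_inv g := by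
    obtain ⟨g, hg⟩ := g
    apply Subtype.ext
    simp only
    have hout : (QuotientGroup.mk (QuotientGroup.mk g : G ⧸ Subgroup.zpowers z).out :
        G ⧸ Subgroup.zpowers z) = QuotientGroup.mk g := QuotientGroup.out_eq' _
    set o := (QuotientGroup.mk g : G ⧸ Subgroup.zpowers z).out with ho
    have hu : o⁻¹ * g ∈ Subgroup.zpowers z := by
      rw [← QuotientGroup.eq]; exact hout
    rcases mem_zpowers_of_sq z hz _ hu with h | h
    · have hgo : g = o := (inv_mul_eq_one.1 h).symm
      have hd : decide (g ≠ o) = false := decide_eq_false (fun hc => hc hgo)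
      rw [hd]
      simpa using hgo.symm
    · have hgo : g = o * z := eq_mul_of_inv_mul_eq h
      have hne : g ≠ o := by
        rw [hgo]; intro hc
        exact hz1 (mul_left_cancel (hc.trans (mul_one o).symm))
      have hd : decide (g ≠ o) = true := decide_eq_true hne
      rw [hd]
      simpa using hgo.symm
section ChunkA

/-- squares-in-product equiv -/
def prodSqEquiv {α β : Type*} [Monoid α] [Monoid β] (c : α × β) :
    {x : α × β // x * x = c} ≃ ({a : α // a * a = c.1} × {b : β // b * b = c.2}) where
  toFun x := (⟨x.1.1, congrArg Prod.fst x.2⟩, ⟨x.1.2, congrArg Prod.snd x.2⟩)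
  invFun p := ⟨(p.1.1, p.2.1), Prod.ext p.1.2 p.2.2⟩
  left_inv x := rfl
  right_inv p := rfl

/-- subtype over Multiplicative to additive side -/
def multSubtypeEquiv {A : Type*} (p : A → Prop) :
    {n : Multiplicative A // p (Multiplicative.toAdd n)} ≃ {x : A // p x} :=
  Multiplicative.toAdd.subtypeEquiv (fun _ => Iff.rfl)

lemma act_eval (q : ℕ) (u : (ZMod q)ˣ) (hu : u ^ 2 = 1) (g : Multiplicative (ZMod 2))
    (n : Multiplicative (ZMod q)) :
    ((zmodUnitsToMulAut q).comp (c2hom u hu) g) n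
      = Multiplicative.ofAdd (((u ^ (Multiplicative.toAdd g).val : (ZMod q)ˣ) : ZMod q)
          * Multiplicative.toAdd n) := rfl

lemma act_eval2 (q : ℕ) (u v : (ZMod q)ˣ) (hu : u ^ 2 = 1) (hv : v ^ 2 = 1)
    (g : Multiplicative (ZMod 2) × Multiplicative (ZMod 2)) (n : Multiplicative (ZMod q)) :
    ((zmodUnitsToMulAut q).comp (MonoidHom.coprod (c2hom u hu) (c2hom v hv)) g) n
      = Multiplicative.ofAdd (((u ^ (Multiplicative.toAdd g.1).val
          * v ^ (Multiplicative.toAdd g.2).val : (ZMod q)ˣ) : ZMod q)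
          * Multiplicative.toAdd n) := rfl

end ChunkA
section ChunkB
open DihedralGroup

/-- constructor for homs out of the dihedral group -/
def dihHom {G : Type*} [Group G] {n : ℕ} (A B : ZMod n → G)
    (hAA : ∀ i j, A i * A j = A (i + j))
    (hAB : ∀ i j, A i * B j = B (j - i))
    (hBA : ∀ i j, B i * A j = B (i + j))
    (hBB : ∀ i j, B i * B j = A (j - i)) : DihedralGroup n →* G :=
  MonoidHom.mk' (fun x => match x with | r i => A i | sr i => B i) (by
    rintro (i | i) (j | j)
    · rw [r_mul_r]; exact (hAA i j).symm
    · rw [r_mul_sr]; exact (hAB i j).symm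
    · rw [sr_mul_r]; exact (hBA i j).symm
    · rw [sr_mul_sr]; exact (hBB i j).symm)

@[simp] lemma dihHom_r {G : Type*} [Group G] {n : ℕ} (A B : ZMod n → G) (h1 h2 h3 h4) (i : ZMod n) :
    dihHom A B h1 h2 h3 h4 (r i) = A i := rfl

@[simp] lemma dihHom_sr {G : Type*} [Group G] {n : ℕ} (A B : ZMod n → G) (h1 h2 h3 h4) (i : ZMod n) :
    dihHom A B h1 h2 h3 h4 (sr i) = B i := rfl

/-- the doubling homomorphism `ZMod (2^(d-1)) →+ ZMod (2^d)` -/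
noncomputable def dbl (d : ℕ) (hd : 1 ≤ d) : ZMod (2 ^ (d - 1)) →+ ZMod (2 ^ d) :=
  ZMod.lift (2 ^ (d - 1)) ⟨(AddMonoidHom.mulRight (2 : ZMod (2 ^ d))).comp
      (Int.castAddHom (ZMod (2 ^ d))), by
    simp only [AddMonoidHom.comp_apply, Int.coe_castAddHom, AddMonoidHom.mulRight_apply]
    push_cast
    rw [← pow_succ, show d - 1 + 1 = d by omega]
    exact zmod_two_pow_self d⟩

lemma dbl_apply (d : ℕ) (hd : 1 ≤ d) (i : ZMod (2 ^ (d - 1))) :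
    dbl d hd i = ((2 * i.val : ℕ) : ZMod (2 ^ d)) := by
  haveI : NeZero (2 ^ (d-1)) := ⟨by positivity⟩
  have h1 : dbl d hd 1 = (2 : ZMod (2 ^ d)) := by
    have : ((1 : ℤ) : ZMod (2 ^ (d-1))) = 1 := by push_cast; rfl
    rw [← this, dbl, ZMod.lift_coe]
    simp
  have h : i = (i.val : ℕ) • (1 : ZMod (2 ^ (d-1))) := by
    rw [nsmul_eq_mul, mul_one, ZMod.natCast_val, ZMod.cast_id]
  calc dbl d hd i = dbl d hd ((i.val : ℕ) • 1) := by rw [← h]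
    _ = (i.val : ℕ) • dbl d hd 1 := map_nsmul _ _ _
    _ = (i.val : ℕ) • (2 : ZMod (2 ^ d)) := by rw [h1]
    _ = ((2 * i.val : ℕ) : ZMod (2 ^ d)) := by
        rw [nsmul_eq_mul]; push_cast; ring

lemma dbl_injective (d : ℕ) (hd : 1 ≤ d) : Function.Injective (dbl d hd) := by
  haveI : NeZero (2 ^ (d-1)) := ⟨by positivity⟩
  intro a b hab
  rw [dbl_apply, dbl_apply] at hab
  rw [ZMod.natCast_eq_natCast_iff] at hab
  have ha : 2 * a.val < 2 ^ d := by
    have := a.val_lt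
    have h2 : 2 * a.val < 2 * 2 ^ (d-1) := by omega
    rw [← pow_succ', show d - 1 + 1 = d by omega] at h2
    exact h2
  have hb : 2 * b.val < 2 ^ d := by
    have := b.val_lt
    have h2 : 2 * b.val < 2 * 2 ^ (d-1) := by omega
    rw [← pow_succ', show d - 1 + 1 = d by omega] at h2
    exact h2
  have := Nat.ModEq.eq_of_lt_of_lt hab ha hb
  exact ZMod.val_injective _ (by omega)

lemma dbl_halftorsion (d : ℕ) (hd : 1 ≤ d) (i : ZMod (2 ^ (d - 1))) :
    (2 : ZMod (2 ^ d)) ^ (d - 1) * dbl d hd i = 0 := by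
  rw [dbl_apply]
  have : ((2:ZMod (2^d)) ^ (d-1)) = ((2 ^ (d-1) : ℕ) : ZMod (2^d)) := by push_cast; ring
  rw [this, ← Nat.cast_mul, show 2 ^ (d-1) * (2 * i.val) = 2 ^ d * i.val by
    rw [← mul_assoc, ← pow_succ, show d - 1 + 1 = d by omega], Nat.cast_mul,
    ZMod.natCast_self, zero_mul]

end ChunkB
section ChunkC
open DihedralGroup

/-! ### cpGen basics -/

lemma cpGen_sq (d : ℕ) : cpGen d * cpGen d = 1 := by
  refine Prod.ext ?_ ?_
  · show r _ * r _ = _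
    rw [r_mul_r, half_add_half d]
    rfl
  · show Multiplicative.ofAdd (2 : ZMod 4) * Multiplicative.ofAdd (2 : ZMod 4)
      = (1 : Multiplicative (ZMod 4))
    decide

lemma cpGen_ne_one (d : ℕ) : cpGen d ≠ 1 := by
  intro h
  have h2 : Multiplicative.ofAdd (2 : ZMod 4) = (1 : Multiplicative (ZMod 4)) :=
    congrArg Prod.snd h
  exact absurd h2 (by decide)

/-! ### subgroup for A -/

lemma subA (d : ℕ) (hd : 1 ≤ d) : ∃ H : Subgroup (GroupA d), H.index = 2 ∧
    Nonempty (H ≃* DihedralGroup (2 ^ (d - 1))) := by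
  haveI : NeZero (2 ^ (d-1)) := ⟨by positivity⟩
  set f := MonoidHom.inl (DihedralGroup (2 ^ (d - 1))) (Multiplicative (ZMod 2)) with hf
  have hinj : Function.Injective f := fun a b h => congrArg Prod.fst h
  refine ⟨f.range, ?_, ⟨(MonoidHom.ofInjective hinj).symm⟩⟩
  have hcard : Nat.card f.range = 2 ^ d := by
    rw [← Nat.card_congr (MonoidHom.ofInjective hinj).toEquiv, Nat.card_eq_fintype_card,
      DihedralGroup.card, ← pow_succ', show d - 1 + 1 = d by omega]
  have hG : Nat.card (GroupA d) = 2 ^ (d + 1) := by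
    rw [Nat.card_prod, Nat.card_eq_fintype_card, DihedralGroup.card,
      Nat.card_eq_fintype_card (α := Multiplicative (ZMod 2))]
    show 2 * 2 ^ (d-1) * 2 = _
    rw [← pow_succ', show d - 1 + 1 = d by omega, ← pow_succ]
  have := Subgroup.index_mul_card f.range
  rw [hcard, hG, pow_succ, mul_comm (2^d) 2] at this
  exact Nat.eq_of_mul_eq_mul_right (by positivity) this

/-! ### subgroup for B -/

lemma subB (d : ℕ) (hd : 1 ≤ d) : ∃ H : Subgroup (GroupB d), H.index = 2 ∧
    Nonempty (H ≃* DihedralGroup (2 ^ (d - 1))) := by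
  haveI : NeZero (2 ^ (d-1)) := ⟨by positivity⟩
  set f := (QuotientGroup.mk' (Subgroup.zpowers (cpGen d))).comp
    (MonoidHom.inl (DihedralGroup (2 ^ (d - 1))) (Multiplicative (ZMod 4))) with hf
  have hinj : Function.Injective f := by
    rw [injective_iff_map_eq_one]
    intro g hg
    have hmem : ((g, 1) : DihedralGroup (2 ^ (d - 1)) × Multiplicative (ZMod 4))
        ∈ Subgroup.zpowers (cpGen d) := by
      rwa [← QuotientGroup.eq_one_iff]
    rcases mem_zpowers_of_sq _ (cpGen_sq d) _ hmem with h | h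
    · exact congrArg Prod.fst h
    · have h2 : (1 : Multiplicative (ZMod 4)) = Multiplicative.ofAdd (2 : ZMod 4) :=
        congrArg Prod.snd h
      exact absurd h2 (by decide)
  refine ⟨f.range, ?_, ⟨(MonoidHom.ofInjective hinj).symm⟩⟩
  have hcard : Nat.card f.range = 2 ^ d := by
    rw [← Nat.card_congr (MonoidHom.ofInjective hinj).toEquiv, Nat.card_eq_fintype_card,
      DihedralGroup.card, ← pow_succ', show d - 1 + 1 = d by omega]
  have horder : orderOf (cpGen d) = 2 := by
    refine orderOf_eq_prime ?_ (cpGen_ne_one d)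
    rw [pow_two]; exact cpGen_sq d
  have hG : Nat.card (GroupB d) = 2 ^ (d + 1) := by
    have h1 := Subgroup.card_eq_card_quotient_mul_card_subgroup
      (Subgroup.zpowers (cpGen d))
    rw [Nat.card_zpowers, horder] at h1
    have h2 : Nat.card (DihedralGroup (2 ^ (d - 1)) × Multiplicative (ZMod 4))
        = 2 ^ (d + 2) := by
      rw [Nat.card_prod, Nat.card_eq_fintype_card, DihedralGroup.card,
        Nat.card_eq_fintype_card (α := Multiplicative (ZMod 4))]
      show 2 * 2 ^ (d-1) * 4 = _
      rw [← pow_succ', show d - 1 + 1 = d by omega, show (4:ℕ) = 2^2 by norm_num, ← pow_add]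
    rw [h2] at h1
    have : Nat.card (GroupB d) * 2 = 2 ^ (d+1) * 2 := by
      rw [← h1, pow_succ]
    exact Nat.eq_of_mul_eq_mul_right (by norm_num) this
  have := Subgroup.index_mul_card f.range
  rw [hcard, hG, pow_succ, mul_comm (2^d) 2] at this
  exact Nat.eq_of_mul_eq_mul_right (by positivity) this

/-! ### subgroup for C -/

lemma subC (d : ℕ) (hd : 1 ≤ d) : ∃ H : Subgroup (DihedralGroup (2 ^ d)), H.index = 2 ∧
    Nonempty (H ≃* DihedralGroup (2 ^ (d - 1))) := by
  haveI : NeZero (2 ^ (d-1)) := ⟨by positivity⟩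
  haveI : NeZero (2 ^ d) := ⟨by positivity⟩
  set f : DihedralGroup (2 ^ (d-1)) →* DihedralGroup (2 ^ d) :=
    dihHom (fun i => r (dbl d hd i)) (fun i => sr (dbl d hd i))
      (fun i j => by rw [r_mul_r, ← map_add])
      (fun i j => by rw [r_mul_sr, ← map_sub])
      (fun i j => by rw [sr_mul_r, ← map_add])
      (fun i j => by rw [sr_mul_sr, ← map_sub]) with hf
  have hinj : Function.Injective f := by
    rintro (i | i) (j | j) h <;> simp only [hf, dihHom_r, dihHom_sr] at h
    · rw [DihedralGroup.r.injEq] at h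
      rw [dbl_injective d hd h]
    · exact absurd h (by simp)
    · exact absurd h (by simp)
    · rw [DihedralGroup.sr.injEq] at h
      rw [dbl_injective d hd h]
  refine ⟨f.range, ?_, ⟨(MonoidHom.ofInjective hinj).symm⟩⟩
  have hcard : Nat.card f.range = 2 ^ d := by
    rw [← Nat.card_congr (MonoidHom.ofInjective hinj).toEquiv, Nat.card_eq_fintype_card,
      DihedralGroup.card, ← pow_succ', show d - 1 + 1 = d by omega]
  have hG : Nat.card (DihedralGroup (2 ^ d)) = 2 ^ (d + 1) := by
    rw [Nat.card_eq_fintype_card, DihedralGroup.card, ← pow_succ']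
  have := Subgroup.index_mul_card f.range
  rw [hcard, hG, pow_succ, mul_comm (2^d) 2] at this
  exact Nat.eq_of_mul_eq_mul_right (by positivity) this

end ChunkC
section ChunkD
open DihedralGroup Multiplicative

lemma nat_card_mult (A : Type*) : Nat.card (Multiplicative A) = Nat.card A :=
  Nat.card_congr Multiplicative.toAdd

lemma c2upow_one {q : ℕ} (u : (ZMod q)ˣ) :
    u ^ (Multiplicative.toAdd (1 : Multiplicative (ZMod 2))).val = 1 := by
  rw [show (Multiplicative.toAdd (1 : Multiplicative (ZMod 2))).val = 0 from rfl, pow_zero]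

lemma c2upow_gen {q : ℕ} (u : (ZMod q)ˣ) :
    u ^ (Multiplicative.toAdd (Multiplicative.ofAdd (1 : ZMod 2))).val = u := by
  rw [show (Multiplicative.toAdd (Multiplicative.ofAdd (1 : ZMod 2))).val = 1 from rfl, pow_one]

lemma act_eval2' (q : ℕ) (u v : (ZMod q)ˣ) (hu : u ^ 2 = 1) (hv : v ^ 2 = 1)
    (a b : Multiplicative (ZMod 2)) (n : Multiplicative (ZMod q)) :
    ((zmodUnitsToMulAut q).comp (MonoidHom.coprod (c2hom u hu) (c2hom v hv)) (a, b)) n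
      = Multiplicative.ofAdd (((u ^ (Multiplicative.toAdd a).val
          * v ^ (Multiplicative.toAdd b).val : (ZMod q)ˣ) : ZMod q)
          * Multiplicative.toAdd n) := rfl

lemma sdUnit_mul_dbl (d : ℕ) (hd : 2 ≤ d) (hd1 : 1 ≤ d) (i : ZMod (2 ^ (d - 1))) :
    ((sdUnit d hd : (ZMod (2 ^ d))ˣ) : ZMod (2 ^ d)) * dbl d hd1 i = -(dbl d hd1 i) := by
  show ((2 : ZMod (2 ^ d)) ^ (d - 1) - 1) * dbl d hd1 i = _
  rw [sub_mul, one_mul, dbl_halftorsion d hd1 i, zero_sub]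

lemma subD (d : ℕ) (hd : 2 ≤ d) : ∃ H : Subgroup (SemidihedralGroup d hd), H.index = 2 ∧
    Nonempty (H ≃* DihedralGroup (2 ^ (d - 1))) := by
  haveI : NeZero (2 ^ (d-1)) := ⟨by positivity⟩
  have hd1 : 1 ≤ d := by omega
  set φ := (zmodUnitsToMulAut (2 ^ d)).comp (c2hom (sdUnit d hd) (sdUnit_sq d hd)) with hφ
  set t : Multiplicative (ZMod 2) := Multiplicative.ofAdd 1 with ht
  have htt : t * t = 1 := by decide
  set A : ZMod (2 ^ (d-1)) → SemidihedralGroup d hd :=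
    fun i => ⟨Multiplicative.ofAdd (dbl d hd1 i), 1⟩ with hA
  set B : ZMod (2 ^ (d-1)) → SemidihedralGroup d hd :=
    fun i => ⟨Multiplicative.ofAdd (-(dbl d hd1 i)), t⟩ with hB
  set f : DihedralGroup (2 ^ (d-1)) →* SemidihedralGroup d hd := dihHom A B
    (fun i j => by
      apply SemidirectProduct.ext
      · show ofAdd (dbl d hd1 i) * φ 1 (ofAdd (dbl d hd1 j)) = ofAdd (dbl d hd1 (i+j))
        rw [hφ, act_eval, c2upow_one, Units.val_one, one_mul, toAdd_ofAdd, ← ofAdd_add,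
          ← map_add]
      · show (1 : Multiplicative (ZMod 2)) * 1 = 1
        exact mul_one 1)
    (fun i j => by
      apply SemidirectProduct.ext
      · show ofAdd (dbl d hd1 i) * φ 1 (ofAdd (-(dbl d hd1 j))) = ofAdd (-(dbl d hd1 (j-i)))
        rw [hφ, act_eval, c2upow_one, Units.val_one, one_mul, toAdd_ofAdd, ← ofAdd_add]
        exact congrArg ofAdd (by rw [map_sub]; ring)
      · show (1 : Multiplicative (ZMod 2)) * t = t
        exact one_mul t)
    (fun i j => by
      apply SemidirectProduct.ext
      · show ofAdd (-(dbl d hd1 i)) * φ t (ofAdd (dbl d hd1 j)) = ofAdd (-(dbl d hd1 (i+j)))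
        rw [hφ, ht, act_eval, c2upow_gen, toAdd_ofAdd, sdUnit_mul_dbl d hd hd1, ← ofAdd_add]
        exact congrArg ofAdd (by rw [map_add]; ring)
      · show t * 1 = t
        exact mul_one t)
    (fun i j => by
      apply SemidirectProduct.ext
      · show ofAdd (-(dbl d hd1 i)) * φ t (ofAdd (-(dbl d hd1 j))) = ofAdd (dbl d hd1 (j-i))
        rw [hφ, ht, act_eval, c2upow_gen, toAdd_ofAdd, mul_neg, sdUnit_mul_dbl d hd hd1,
          neg_neg, ← ofAdd_add]
        exact congrArg ofAdd (by rw [map_sub]; ring)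
      · show t * t = 1
        exact htt) with hf
  have hinj : Function.Injective f := by
    rintro (i | i) (j | j) h <;> simp only [hf, dihHom_r, dihHom_sr, hA, hB] at h
    · have h2 : ofAdd (dbl d hd1 i) = ofAdd (dbl d hd1 j) := congrArg SemidirectProduct.left h
      rw [dbl_injective d hd1 (ofAdd.injective h2)]
    · have h2 : (1 : Multiplicative (ZMod 2)) = Multiplicative.ofAdd 1 :=
        congrArg SemidirectProduct.right h
      exact absurd h2 (by decide)
    · have h2 : Multiplicative.ofAdd (1 : ZMod 2) = 1 :=
        congrArg SemidirectProduct.right h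
      exact absurd h2 (by decide)
    · have h2 : ofAdd (-(dbl d hd1 i)) = ofAdd (-(dbl d hd1 j)) :=
        congrArg SemidirectProduct.left h
      rw [dbl_injective d hd1 (neg_inj.1 (ofAdd.injective h2))]
  refine ⟨f.range, ?_, ⟨(MonoidHom.ofInjective hinj).symm⟩⟩
  have hcard : Nat.card f.range = 2 ^ d := by
    rw [← Nat.card_congr (MonoidHom.ofInjective hinj).toEquiv, Nat.card_eq_fintype_card,
      DihedralGroup.card, ← pow_succ', show d - 1 + 1 = d by omega]
  have hG : Nat.card (SemidihedralGroup d hd) = 2 ^ (d + 1) := by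
    rw [Nat.card_congr (Equiv.mk (fun x => (x.left, x.right)) (fun p => ⟨p.1, p.2⟩)
      (fun x => rfl) (fun p => rfl)), Nat.card_prod, nat_card_mult, nat_card_mult,
      Nat.card_zmod, Nat.card_zmod, ← pow_succ]
  have := Subgroup.index_mul_card f.range
  rw [hcard, hG, pow_succ, mul_comm (2^d) 2] at this
  exact Nat.eq_of_mul_eq_mul_right (by positivity) this

lemma subE (d : ℕ) (hd : 3 ≤ d) : ∃ H : Subgroup (GroupE d hd), H.index = 2 ∧
    Nonempty (H ≃* DihedralGroup (2 ^ (d - 1))) := by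
  haveI : NeZero (2 ^ (d-1)) := ⟨by positivity⟩
  set φ := (zmodUnitsToMulAut (2 ^ (d-1))).comp
    (MonoidHom.coprod (c2hom (-1 : (ZMod (2 ^ (d - 1)))ˣ) neg_one_sq)
      (c2hom (geUnit d hd) (geUnit_sq d hd))) with hφ
  set t : Multiplicative (ZMod 2) × Multiplicative (ZMod 2) :=
    (Multiplicative.ofAdd 1, 1) with ht
  have htt : t * t = 1 := by decide
  have hact1 : ∀ x : ZMod (2 ^ (d-1)), φ 1 (ofAdd x) = ofAdd x := by
    intro x
    rw [hφ, show (1 : Multiplicative (ZMod 2) × Multiplicative (ZMod 2)) = (1, 1) from rfl,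
      act_eval2', c2upow_one, c2upow_one, mul_one, Units.val_one, one_mul, toAdd_ofAdd]
  have hactt : ∀ x : ZMod (2 ^ (d-1)), φ t (ofAdd x) = ofAdd (-x) := by
    intro x
    rw [hφ, ht, act_eval2', c2upow_gen, c2upow_one, mul_one, Units.val_neg, Units.val_one,
      toAdd_ofAdd, neg_one_mul]
  set A : ZMod (2 ^ (d-1)) → GroupE d hd := fun i => ⟨Multiplicative.ofAdd i, 1⟩ with hA
  set B : ZMod (2 ^ (d-1)) → GroupE d hd := fun i => ⟨Multiplicative.ofAdd (-i), t⟩ with hB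
  set f : DihedralGroup (2 ^ (d-1)) →* GroupE d hd := dihHom A B
    (fun i j => by
      apply SemidirectProduct.ext
      · show ofAdd i * φ 1 (ofAdd j) = ofAdd (i+j)
        rw [hact1, ← ofAdd_add]
      · exact mul_one 1)
    (fun i j => by
      apply SemidirectProduct.ext
      · show ofAdd i * φ 1 (ofAdd (-j)) = ofAdd (-(j-i))
        rw [hact1, ← ofAdd_add]
        exact congrArg ofAdd (by ring)
      · exact one_mul t)
    (fun i j => by
      apply SemidirectProduct.ext
      · show ofAdd (-i) * φ t (ofAdd j) = ofAdd (-(i+j))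
        rw [hactt, ← ofAdd_add]
        exact congrArg ofAdd (by ring)
      · exact mul_one t)
    (fun i j => by
      apply SemidirectProduct.ext
      · show ofAdd (-i) * φ t (ofAdd (-j)) = ofAdd (j-i)
        rw [hactt, neg_neg, ← ofAdd_add]
        exact congrArg ofAdd (by ring)
      · exact htt) with hf
  have hinj : Function.Injective f := by
    rintro (i | i) (j | j) h <;> simp only [hf, dihHom_r, dihHom_sr, hA, hB] at h
    · have h2 : ofAdd i = ofAdd j := congrArg SemidirectProduct.left h
      rw [ofAdd.injective h2]
    · have h2 : (1 : Multiplicative (ZMod 2) × Multiplicative (ZMod 2))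
          = (Multiplicative.ofAdd 1, 1) := congrArg SemidirectProduct.right h
      exact absurd h2 (by decide)
    · have h2 : ((Multiplicative.ofAdd (1 : ZMod 2), 1)
          : Multiplicative (ZMod 2) × Multiplicative (ZMod 2)) = 1 :=
        congrArg SemidirectProduct.right h
      exact absurd h2 (by decide)
    · have h2 : ofAdd (-i) = ofAdd (-j) := congrArg SemidirectProduct.left h
      rw [neg_inj.1 (ofAdd.injective h2)]
  refine ⟨f.range, ?_, ⟨(MonoidHom.ofInjective hinj).symm⟩⟩
  have hcard : Nat.card f.range = 2 ^ d := by
    rw [← Nat.card_congr (MonoidHom.ofInjective hinj).toEquiv, Nat.card_eq_fintype_card,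
      DihedralGroup.card, ← pow_succ', show d - 1 + 1 = d by omega]
  have hG : Nat.card (GroupE d hd) = 2 ^ (d + 1) := by
    rw [Nat.card_congr (Equiv.mk (fun x => (x.left, x.right)) (fun p => ⟨p.1, p.2⟩)
      (fun x => rfl) (fun p => rfl))]
    simp only [Nat.card_prod, nat_card_mult, Nat.card_zmod]
    rw [show (2:ℕ) ^ (d-1) * (2 * 2) = 2 ^ (d-1) * 2 ^ 2 by norm_num, ← pow_add,
      show d - 1 + 2 = d + 1 by omega]
  have := Subgroup.index_mul_card f.range
  rw [hcard, hG, pow_succ, mul_comm (2^d) 2] at this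
  exact Nat.eq_of_mul_eq_mul_right (by positivity) this

end ChunkD
section ChunkE
open DihedralGroup Multiplicative

lemma mult_mul_ofAdd_eq_one {A : Type*} [AddGroup A] (n : Multiplicative A) (y : A) :
    n * ofAdd y = 1 ↔ toAdd n + y = 0 := by
  constructor
  · intro h; have := congrArg toAdd h; simpa using this
  · intro h; have := congrArg ofAdd h; simpa using this

/-- condition translation for cyclic-by-C2 semidirect products -/
def condEquiv (q : ℕ) (u : (ZMod q)ˣ) (hu : u ^ 2 = 1) (g : Multiplicative (ZMod 2)) :
    {n : Multiplicative (ZMod q) //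
        n * ((zmodUnitsToMulAut q).comp (c2hom u hu) g) n = 1}
      ≃ {x : ZMod q // x + ((u ^ (Multiplicative.toAdd g).val : (ZMod q)ˣ) : ZMod q) * x = 0} :=
  Multiplicative.toAdd.subtypeEquiv (fun n => by rw [act_eval, mult_mul_ofAdd_eq_one])

def condEquiv2 (q : ℕ) (u v : (ZMod q)ˣ) (hu : u ^ 2 = 1) (hv : v ^ 2 = 1)
    (a b : Multiplicative (ZMod 2)) :
    {n : Multiplicative (ZMod q) //
        n * ((zmodUnitsToMulAut q).comp
          (MonoidHom.coprod (c2hom u hu) (c2hom v hv)) (a, b)) n = 1}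
      ≃ {x : ZMod q // x + ((u ^ (Multiplicative.toAdd a).val
            * v ^ (Multiplicative.toAdd b).val : (ZMod q)ˣ) : ZMod q) * x = 0} :=
  Multiplicative.toAdd.subtypeEquiv (fun n => by rw [act_eval2', mult_mul_ofAdd_eq_one])

lemma card_cond_iff (m k : ℕ) (hk : k ≤ m) (c : ZMod (2 ^ m))
    (hc : ∀ x : ZMod (2 ^ m), x + c * x = 0 ↔ (2 : ZMod (2 ^ m)) ^ k * x = 0) :
    Nat.card {x : ZMod (2 ^ m) // x + c * x = 0} = 2 ^ k := by
  rw [← card_two_pow_torsion m k hk]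
  exact Nat.card_congr (Equiv.subtypeEquivRight hc)

lemma card_add_self (m : ℕ) (hm : 1 ≤ m) :
    Nat.card {x : ZMod (2 ^ m) // x + x = 0} = 2 :=
  calc Nat.card {x : ZMod (2 ^ m) // x + x = 0}
      = Nat.card {x : ZMod (2 ^ m) // (2 : ZMod (2 ^ m)) ^ 1 * x = 0} :=
        Nat.card_congr (Equiv.subtypeEquivRight (fun x => by rw [pow_one, two_mul]))
    _ = 2 ^ 1 := card_two_pow_torsion m 1 hm
    _ = 2 := pow_one 2

lemma card_shift (m : ℕ) (hm : 1 ≤ m) (b c : ZMod (2 ^ m)) (hb : b + b = c) :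
    Nat.card {i : ZMod (2 ^ m) // i + i = c} = 2 := by
  have step : {x : ZMod (2 ^ m) // x + x = 0} ≃ {i : ZMod (2 ^ m) // i + i = c} := by
    refine (Equiv.addRight b).subtypeEquiv (fun x => ?_)
    rw [Equiv.coe_addRight]
    constructor
    · intro h
      show x + b + (x + b) = c
      have e1 : x + b + (x + b) = x + x + (b + b) := by ring
      rw [e1, h, hb, zero_add]
    · intro h
      have e1 : x + x = (x + b + (x + b)) - (b + b) := by ring
      rw [e1, h, hb, sub_self]
  rw [← Nat.card_congr step]
  exact card_add_self m hm

/-- count of square roots of 1 in a 2-power dihedral group -/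
lemma cardDih (m : ℕ) (hm : 1 ≤ m) :
    Nat.card {x : DihedralGroup (2 ^ m) // x * x = 1} = 2 ^ m + 2 := by
  haveI : NeZero (2 ^ m) := ⟨by positivity⟩
  rw [Nat.card_congr (dihSqEquiv (2 ^ m)), Nat.card_sum, card_add_self m hm, Nat.card_zmod]
  omega

lemma cardsq_zmod2 : Nat.card {b : Multiplicative (ZMod 2) // b * b = 1} = 2 := by
  rw [Nat.card_eq_fintype_card]; decide

lemma cardsq_zmod4 : Nat.card {b : Multiplicative (ZMod 4) // b * b = 1} = 2 := by
  rw [Nat.card_eq_fintype_card]; decide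

lemma cardc_zmod4 :
    Nat.card {b : Multiplicative (ZMod 4) // b * b = Multiplicative.ofAdd 2} = 2 := by
  rw [Nat.card_eq_fintype_card]; decide

/-- (a) -/
lemma cardA_sq (d : ℕ) (hd : 2 ≤ d) :
    Nat.card {x : GroupA d // x * x = 1} = 2 ^ d + 4 := by
  rw [Nat.card_congr (prodSqEquiv (1 : GroupA d)), Nat.card_prod]
  rw [show Nat.card {a : DihedralGroup (2 ^ (d-1)) // a * a = (1 : GroupA d).1}
      = 2 ^ (d-1) + 2 from cardDih (d-1) (by omega),
    show Nat.card {b : Multiplicative (ZMod 2) // b * b = (1 : GroupA d).2} = 2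
      from cardsq_zmod2]
  have : (2:ℕ)^d = 2 * 2^(d-1) := by rw [← pow_succ', show d - 1 + 1 = d by omega]
  omega

/-- (c) -/
lemma cardC_sq (d : ℕ) (hd : 1 ≤ d) :
    Nat.card {x : DihedralGroup (2 ^ d) // x * x = 1} = 2 ^ d + 2 := cardDih d hd

/-- (d) -/
lemma cardD_sq (d : ℕ) (hd : 2 ≤ d) :
    Nat.card {x : SemidihedralGroup d hd // x * x = 1} = 2 ^ (d - 1) + 2 := by
  haveI : NeZero (2 ^ d) := ⟨by positivity⟩
  set φ := (zmodUnitsToMulAut (2 ^ d)).comp (c2hom (sdUnit d hd) (sdUnit_sq d hd)) with hφ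
  rw [Nat.card_congr (sdpSqEquiv φ (by decide)), Nat.card_eq_fintype_card,
    Fintype.card_sigma]
  have huniv : (Finset.univ : Finset (Multiplicative (ZMod 2)))
      = {1, Multiplicative.ofAdd 1} := by decide
  rw [huniv, Finset.sum_insert (by decide), Finset.sum_singleton]
  have h1 : Fintype.card {n : Multiplicative (ZMod (2 ^ d)) // n * (φ 1) n = 1} = 2 := by
    rw [← Nat.card_eq_fintype_card, hφ]
    refine (Nat.card_congr (condEquiv _ _ _ _)).trans
      ((card_cond_iff d 1 (by omega) _ (fun x => ?_)).trans (pow_one 2))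
    rw [c2upow_one, Units.val_one, pow_one, two_mul, one_mul]
  have h2 : Fintype.card {n : Multiplicative (ZMod (2 ^ d)) //
      n * (φ (Multiplicative.ofAdd 1)) n = 1} = 2 ^ (d - 1) := by
    rw [← Nat.card_eq_fintype_card, hφ, Nat.card_congr (condEquiv _ _ _ _)]
    refine card_cond_iff d (d-1) (by omega) _ (fun x => ?_)
    rw [c2upow_gen]
    show x + ((2 : ZMod (2 ^ d)) ^ (d - 1) - 1) * x = 0 ↔ _
    constructor
    · intro h
      have : ((2 : ZMod (2 ^ d)) ^ (d - 1)) * x = 0 := by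
        calc ((2 : ZMod (2 ^ d)) ^ (d - 1)) * x
            = x + ((2 : ZMod (2 ^ d)) ^ (d - 1) - 1) * x := by ring
          _ = 0 := h
      exact this
    · intro h
      calc x + ((2 : ZMod (2 ^ d)) ^ (d - 1) - 1) * x
          = ((2 : ZMod (2 ^ d)) ^ (d - 1)) * x := by ring
        _ = 0 := h
  rw [h1, h2]
  omega

/-- (e) -/
lemma cardE_sq (d : ℕ) (hd : 3 ≤ d) (hd4 : 4 ≤ d) :
    Nat.card {x : GroupE d hd // x * x = 1} = 3 * 2 ^ (d - 2) + 4 := by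
  haveI : NeZero (2 ^ (d-1)) := ⟨by positivity⟩
  set φ := (zmodUnitsToMulAut (2 ^ (d-1))).comp
    (MonoidHom.coprod (c2hom (-1 : (ZMod (2 ^ (d - 1)))ˣ) neg_one_sq)
      (c2hom (geUnit d hd) (geUnit_sq d hd))) with hφ
  rw [Nat.card_congr (sdpSqEquiv φ (by decide)), Nat.card_eq_fintype_card,
    Fintype.card_sigma]
  have huniv : (Finset.univ : Finset (Multiplicative (ZMod 2) × Multiplicative (ZMod 2)))
      = {(1, 1), (1, Multiplicative.ofAdd 1), (Multiplicative.ofAdd 1, 1),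
        (Multiplicative.ofAdd 1, Multiplicative.ofAdd 1)} := by decide
  rw [huniv, Finset.sum_insert (by decide), Finset.sum_insert (by decide),
    Finset.sum_insert (by decide), Finset.sum_singleton]
  have hwunit : IsUnit ((2 : ZMod (2 ^ (d-1))) ^ (d - 3) + 1) := by
    have : ((2 : ZMod (2 ^ (d-1))) ^ (d - 3) + 1) = ((2 ^ (d-3) + 1 : ℕ) : ZMod (2 ^ (d-1))) := by
      push_cast; ring
    rw [this, ZMod.isUnit_iff_coprime]
    refine Nat.Coprime.pow_right _ (Nat.coprime_two_right.2 (Nat.odd_iff.2 ?_))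
    have h2 : (2:ℕ) ∣ 2 ^ (d-3) := dvd_pow_self 2 (show d - 3 ≠ 0 by omega)
    omega
  have h11 : Fintype.card {n : Multiplicative (ZMod (2 ^ (d-1))) // n * (φ (1, 1)) n = 1}
      = 2 := by
    rw [← Nat.card_eq_fintype_card, hφ]
    refine (Nat.card_congr (condEquiv2 _ _ _ _ _ _ _)).trans
      ((card_cond_iff (d-1) 1 (by omega) _ (fun x => ?_)).trans (pow_one 2))
    rw [c2upow_one, c2upow_one, mul_one, Units.val_one, pow_one, two_mul, one_mul]
  have h1e : Fintype.card {n : Multiplicative (ZMod (2 ^ (d-1))) //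
      n * (φ (1, Multiplicative.ofAdd 1)) n = 1} = 2 := by
    rw [← Nat.card_eq_fintype_card, hφ]
    refine (Nat.card_congr (condEquiv2 _ _ _ _ _ _ _)).trans
      ((card_cond_iff (d-1) 1 (by omega) _ (fun x => ?_)).trans (pow_one 2))
    rw [c2upow_one, c2upow_gen, one_mul]
    show x + ((2 : ZMod (2 ^ (d-1))) ^ (d - 2) + 1) * x = 0 ↔ _
    have key : ∀ y : ZMod (2 ^ (d-1)), y + ((2 : ZMod (2 ^ (d-1))) ^ (d - 2) + 1) * y
        = ((2 : ZMod (2 ^ (d-1))) ^ (d - 3) + 1) * ((2 : ZMod (2 ^ (d-1))) ^ 1 * y) := by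
      intro y
      have h23 : (2 : ZMod (2 ^ (d-1))) ^ (d - 2)
          = (2 : ZMod (2 ^ (d-1))) ^ (d - 3) * 2 := by
        rw [← pow_succ, show d - 3 + 1 = d - 2 by omega]
      rw [h23]; ring
    constructor
    · intro h
      rw [key] at h
      exact (hwunit.mul_right_eq_zero).1 h
    · intro h
      rw [key, h, mul_zero]
  have ht1 : Fintype.card {n : Multiplicative (ZMod (2 ^ (d-1))) //
      n * (φ (Multiplicative.ofAdd 1, 1)) n = 1} = 2 ^ (d-1) := by
    rw [← Nat.card_eq_fintype_card, hφ, Nat.card_congr (condEquiv2 _ _ _ _ _ _ _)]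
    refine card_cond_iff (d-1) (d-1) (le_refl _) _ (fun x => ?_)
    rw [c2upow_gen, c2upow_one, mul_one, Units.val_neg, Units.val_one, zmod_two_pow_self,
      zero_mul]
    constructor
    · intro _; rfl
    · intro _; ring
  have hte : Fintype.card {n : Multiplicative (ZMod (2 ^ (d-1))) //
      n * (φ (Multiplicative.ofAdd 1, Multiplicative.ofAdd 1)) n = 1} = 2 ^ (d-2) := by
    rw [← Nat.card_eq_fintype_card, hφ, Nat.card_congr (condEquiv2 _ _ _ _ _ _ _)]
    refine card_cond_iff (d-1) (d-2) (by omega) _ (fun x => ?_)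
    rw [c2upow_gen, c2upow_gen, Units.val_mul, Units.val_neg, Units.val_one]
    show x + (-1 * ((2 : ZMod (2 ^ (d-1))) ^ (d - 2) + 1)) * x = 0 ↔ _
    constructor
    · intro h
      have : (2 : ZMod (2 ^ (d-1))) ^ (d-2) * x
          = -(x + (-1 * ((2 : ZMod (2 ^ (d-1))) ^ (d - 2) + 1)) * x) := by ring
      rw [this, h, neg_zero]
    · intro h
      have : x + (-1 * ((2 : ZMod (2 ^ (d-1))) ^ (d - 2) + 1)) * x
          = -((2 : ZMod (2 ^ (d-1))) ^ (d-2) * x) := by ring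
      rw [this, h, neg_zero]
  rw [h11, h1e, ht1, hte]
  have e1 : (2:ℕ)^(d-1) = 2 * 2^(d-2) := by rw [← pow_succ', show d - 2 + 1 = d - 1 by omega]
  omega

/-- (b) -/
lemma cardB_sq (d : ℕ) (hd : 4 ≤ d) :
    Nat.card {x : GroupB d // x * x = 1} = 2 ^ (d - 1) + 4 := by
  haveI : NeZero (2 ^ (d-1)) := ⟨by positivity⟩
  have key := Nat.card_congr (quotSqEquiv (cpGen d) (cpGen_sq d) (cpGen_ne_one d)
    (cpGen_mem_center d))
  rw [Nat.card_prod, Nat.card_eq_fintype_card (α := Bool), Fintype.card_bool] at key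
  -- compute RHS
  have hdisj : Disjoint (fun g : DihedralGroup (2 ^ (d - 1)) × Multiplicative (ZMod 4)
      => g * g = 1) (fun g => g * g = cpGen d) := by
    rw [disjoint_iff_inf_le]
    rintro g ⟨h1, h2⟩
    exact cpGen_ne_one d (h2.symm.trans h1)
  have hsplit := Nat.card_congr (subtypeOrEquiv _ _ hdisj)
  have hc1 : Nat.card {g : DihedralGroup (2 ^ (d - 1)) × Multiplicative (ZMod 4) //
      g * g = 1} = 2 ^ d + 4 := by
    rw [Nat.card_congr (prodSqEquiv (1 : DihedralGroup (2 ^ (d - 1)) × Multiplicative (ZMod 4))),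
      Nat.card_prod]
    rw [show Nat.card {a : DihedralGroup (2 ^ (d-1)) // a * a
        = (1 : DihedralGroup (2 ^ (d - 1)) × Multiplicative (ZMod 4)).1}
        = 2 ^ (d-1) + 2 from cardDih (d-1) (by omega),
      show Nat.card {b : Multiplicative (ZMod 4) // b * b
        = (1 : DihedralGroup (2 ^ (d - 1)) × Multiplicative (ZMod 4)).2} = 2
        from cardsq_zmod4]
    have : (2:ℕ)^d = 2 * 2^(d-1) := by rw [← pow_succ', show d - 1 + 1 = d by omega]
    omega
  have hc2 : Nat.card {g : DihedralGroup (2 ^ (d - 1)) × Multiplicative (ZMod 4) //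
      g * g = cpGen d} = 4 := by
    rw [Nat.card_congr (prodSqEquiv (cpGen d)), Nat.card_prod]
    have hfst : Nat.card {a : DihedralGroup (2 ^ (d-1)) // a * a = (cpGen d).1} = 2 := by
      have hc0 : ((2 ^ (d - 2) : ℕ) : ZMod (2 ^ (d - 1))) ≠ 0 := by
        rw [Ne, ZMod.natCast_eq_zero_iff]
        rw [Nat.pow_dvd_pow_iff_le_right (by norm_num)]
        omega
      rw [show Nat.card {a : DihedralGroup (2 ^ (d-1)) // a * a = (cpGen d).1}
          = Nat.card {i : ZMod (2 ^ (d-1)) //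
              i + i = ((2 ^ (d - 2) : ℕ) : ZMod (2 ^ (d - 1)))}
        from Nat.card_congr (dihSqEqREquiv (2 ^ (d-1)) _ hc0)]
      have hb : ((2 ^ (d - 3) : ℕ) : ZMod (2 ^ (d - 1)))
          + ((2 ^ (d - 3) : ℕ) : ZMod (2 ^ (d - 1)))
          = ((2 ^ (d - 2) : ℕ) : ZMod (2 ^ (d - 1))) := by
        rw [← Nat.cast_add]
        congr 1
        rw [← two_mul, ← pow_succ']
        congr 1
        omega
      exact card_shift (d-1) (by omega) _ _ hb
    have hsnd : Nat.card {b : Multiplicative (ZMod 4) // b * b = (cpGen d).2} = 2 :=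
      cardc_zmod4
    rw [hfst, hsnd]
  have hsum : Nat.card ({x : DihedralGroup (2 ^ (d - 1)) × Multiplicative (ZMod 4) //
        x * x = 1} ⊕ {x : DihedralGroup (2 ^ (d - 1)) × Multiplicative (ZMod 4) //
        x * x = cpGen d}) = (2 ^ d + 4) + 4 := by
    rw [Nat.card_sum, hc1, hc2]
  rw [hsplit, hsum] at key
  have key2 : Nat.card {x : GroupB d // x * x = 1} * 2 = 2 ^ d + 4 + 4 := key
  have : (2:ℕ)^d = 2 * 2^(d-1) := by rw [← pow_succ', show d - 1 + 1 = d by omega]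
  omega

end ChunkE
section ChunkF

lemma card_sq_congr {G H : Type*} [Group G] [Group H] (e : G ≃* H) :
    Nat.card {x : G // x * x = 1} = Nat.card {y : H // y * y = 1} :=
  Nat.card_congr (e.toEquiv.subtypeEquiv (fun x => by
    constructor
    · intro h
      show e x * e x = 1
      rw [← map_mul, h, map_one]
    · intro h
      have h2 : e (x * x) = e 1 := by rw [map_mul, map_one]; exact h
      exact e.injective h2))

end ChunkF
/-- Let `d ≥ 4`.  The five groups
(a) `D_{2^d} × C₂`, (b) the central product `D_{2^d} ∘ C₄`, (c) the dihedral group of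
order `2^(d+1)`, (d) the semidihedral group `SD_{2^(d+1)}`, and
(e) `C_{2^(d-1)} ⋊ (C₂ × C₂)` (with `t` acting by inversion and `e` by
`s ↦ s^(2^(d-2)+1)`) are pairwise non-isomorphic, and each of them contains a subgroup
of index `2` isomorphic to the dihedral group `D_{2^d}` of order `2^d`. -/
theorem five_extensions_pairwise_nonisomorphic (d : ℕ) (hd : 4 ≤ d) :
    (IsEmpty (GroupA d ≃* GroupB d) ∧
     IsEmpty (GroupA d ≃* DihedralGroup (2 ^ d)) ∧
     IsEmpty (GroupA d ≃* SemidihedralGroup d (by omega)) ∧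
     IsEmpty (GroupA d ≃* GroupE d (by omega)) ∧
     IsEmpty (GroupB d ≃* DihedralGroup (2 ^ d)) ∧
     IsEmpty (GroupB d ≃* SemidihedralGroup d (by omega)) ∧
     IsEmpty (GroupB d ≃* GroupE d (by omega)) ∧
     IsEmpty (DihedralGroup (2 ^ d) ≃* SemidihedralGroup d (by omega)) ∧
     IsEmpty (DihedralGroup (2 ^ d) ≃* GroupE d (by omega)) ∧
     IsEmpty (SemidihedralGroup d (by omega) ≃* GroupE d (by omega))) ∧
    ((∃ H : Subgroup (GroupA d), H.index = 2 ∧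
        Nonempty (H ≃* DihedralGroup (2 ^ (d - 1)))) ∧
     (∃ H : Subgroup (GroupB d), H.index = 2 ∧
        Nonempty (H ≃* DihedralGroup (2 ^ (d - 1)))) ∧
     (∃ H : Subgroup (DihedralGroup (2 ^ d)), H.index = 2 ∧
        Nonempty (H ≃* DihedralGroup (2 ^ (d - 1)))) ∧
     (∃ H : Subgroup (SemidihedralGroup d (by omega)), H.index = 2 ∧
        Nonempty (H ≃* DihedralGroup (2 ^ (d - 1)))) ∧
     (∃ H : Subgroup (GroupE d (by omega)), H.index = 2 ∧
        Nonempty (H ≃* DihedralGroup (2 ^ (d - 1))))) := by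

  have hm4 : (4:ℕ) ≤ 2 ^ (d - 2) := by
    calc (4:ℕ) = 2 ^ 2 := by norm_num
      _ ≤ 2 ^ (d - 2) := Nat.pow_le_pow_right (by norm_num) (by omega)
  have e1 : (2:ℕ) ^ (d - 1) = 2 * 2 ^ (d - 2) := by
    rw [← pow_succ', show d - 2 + 1 = d - 1 by omega]
  have e2 : (2:ℕ) ^ d = 2 * 2 ^ (d - 1) := by
    rw [← pow_succ', show d - 1 + 1 = d by omega]
  refine ⟨⟨?_, ?_, ?_, ?_, ?_, ?_, ?_, ?_, ?_, ?_⟩,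
    subA d (by omega), subB d (by omega), subC d (by omega), subD d _, subE d _⟩
  · exact ⟨fun e => by
      have h := card_sq_congr e
      rw [cardA_sq d (by omega), cardB_sq d hd] at h
      omega⟩
  · exact ⟨fun e => by
      have h := card_sq_congr e
      rw [cardA_sq d (by omega), cardC_sq d (by omega)] at h
      omega⟩
  · exact ⟨fun e => by
      have h := card_sq_congr e
      rw [cardA_sq d (by omega), cardD_sq d _] at h
      omega⟩
  · exact ⟨fun e => by
      have h := card_sq_congr e
      rw [cardA_sq d (by omega), cardE_sq d _ hd] at h
      omega⟩
  · exact ⟨fun e => by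
      have h := card_sq_congr e
      rw [cardB_sq d hd, cardC_sq d (by omega)] at h
      omega⟩
  · exact ⟨fun e => by
      have h := card_sq_congr e
      rw [cardB_sq d hd, cardD_sq d _] at h
      omega⟩
  · exact ⟨fun e => by
      have h := card_sq_congr e
      rw [cardB_sq d hd, cardE_sq d _ hd] at h
      omega⟩
  · exact ⟨fun e => by
      have h := card_sq_congr e
      rw [cardC_sq d (by omega), cardD_sq d _] at h
      omega⟩
  · exact ⟨fun e => by
      have h := card_sq_congr e
      rw [cardC_sq d (by omega), cardE_sq d _ hd] at h
      omega⟩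
  · exact ⟨fun e => by
      have h := card_sq_congr e
      rw [cardD_sq d _, cardE_sq d _ hd] at h
      omega⟩
end

section
/- Let d ≥ 3 and let E be a finite group having a subgroup D of index 2 with D isomorphic to the dihedral group of order 2^d. Let D' = [D, D] be the commutator subgroup of D; then D' is normal in E, and in the quotient group E/D' the image of D has a complement. In other words, the extension 1 → D/D' → E/D' → C₂ → 1 always splits. -/
open DihedralGroup
open scoped commutatorElement

lemma aux_r_pow {n : ℕ} (a : ZMod n) (k : ℕ) : (r a) ^ k = r ((k : ZMod n) * a) := by
  induction k with
  | zero => simp [one_def, -r_zero]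
  | succ k ih => rw [pow_succ, ih, r_mul_r]; push_cast; ring_nf

lemma aux_val {n : ℕ} [NeZero n] (a : ZMod n) : ((a.val : ℕ) : ZMod n) = a := by
  rw [ZMod.natCast_val, ZMod.cast_id]

theorem exists_sq_mem_commutator {n : ℕ} [NeZero n] (h4 : 4 ∣ n)
    {E : Type*} [Group E] (D : Subgroup E) (hD : D.index = 2)
    (f : DihedralGroup n →* E) (hinj : Function.Injective f)
    (hrange : f.range = D) :
    ∃ x : E, x ∉ D ∧ x ^ 2 ∈ ⁅D, D⁆ := by
  have hn0 : n ≠ 0 := NeZero.ne n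
  have hn2 : 2 ∣ n := dvd_trans ⟨2, rfl⟩ h4
  have hn4 : 4 ≤ n := Nat.le_of_dvd (Nat.pos_of_ne_zero hn0) h4
  have hne : D ≠ ⊤ := by
    intro h; rw [h, Subgroup.index_top] at hD; exact absurd hD (by norm_num)
  obtain ⟨x, hx⟩ : ∃ x : E, x ∉ D := by
    by_contra h; push_neg at h; exact hne ((Subgroup.eq_top_iff' D).2 h)
  have key2 : ∀ a b : E, a * b ∈ D ↔ (a ∈ D ↔ b ∈ D) := fun a b =>
    Subgroup.mul_mem_iff_of_index_two hD
  have hxi : x⁻¹ ∉ D := fun h => hx (by simpa using D.inv_mem h)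
  have hconjD : ∀ g ∈ D, x⁻¹ * g * x ∈ D := by
    intro g hg
    rw [key2, key2]
    tauto
  have hmem : ∀ g ∈ D, ∃ a, f a = g := by
    intro g hg; rw [← hrange] at hg; exact hg
  set R := f (r 1) with hRdef
  set S := f (sr 0) with hSdef
  have hR : R ∈ D := hrange ▸ ⟨_, rfl⟩
  have hS : S ∈ D := hrange ▸ ⟨_, rfl⟩
  have oconj : ∀ g : E, orderOf (x⁻¹ * g * x) = orderOf g := by
    intro g
    have := (MulAut.conj x⁻¹).orderOf_eq g
    simpa [MulAut.conj_apply] using this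
  have oR : orderOf R = n := by
    rw [hRdef, orderOf_injective f hinj, DihedralGroup.orderOf_r_one]
  -- the conjugate of R is a rotation r i with i odd
  obtain ⟨ai, hai⟩ := hmem _ (hconjD R hR)
  obtain ⟨i, hi⟩ : ∃ i : ZMod n, f (r i) = x⁻¹ * R * x := by
    cases ai with
    | r i => exact ⟨i, hai⟩
    | sr j =>
      exfalso
      have h2 : orderOf (x⁻¹ * R * x) = 2 := by
        rw [← hai, orderOf_injective f hinj, DihedralGroup.orderOf_sr]
      rw [oconj, oR] at h2
      omega
  have oi : orderOf (r i : DihedralGroup n) = n := by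
    have h1 : orderOf (f (r i)) = n := by rw [hi, oconj, oR]
    rwa [orderOf_injective f hinj] at h1
  have hiodd : i.val % 2 = 1 := by
    rw [DihedralGroup.orderOf_r] at oi
    have hg : Nat.gcd n i.val = 1 := by
      rcases (Nat.div_eq_self.mp oi) with h | h
      · exact absurd h hn0
      · exact h
    rcases Nat.even_or_odd i.val with he | ho
    · exfalso
      have : 2 ∣ Nat.gcd n i.val := Nat.dvd_gcd hn2 he.two_dvd
      omega
    · exact Nat.odd_iff.mp ho
  -- the conjugate of S is a reflection sr j
  have hRinv : f (r (-1)) = R⁻¹ := by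
    rw [hRdef, ← map_inv]; rfl
  obtain ⟨aj, haj⟩ := hmem _ (hconjD S hS)
  obtain ⟨j, hj⟩ : ∃ j : ZMod n, f (sr j) = x⁻¹ * S * x := by
    cases aj with
    | sr j => exact ⟨j, haj⟩
    | r j =>
      exfalso
      have hSRS : S * R * S⁻¹ = R⁻¹ := by
        rw [← hRinv, hRdef, hSdef, ← map_inv, ← map_mul, ← map_mul]
        congr 1
        show sr 0 * r 1 * (sr 0)⁻¹ = _
        show sr 0 * r 1 * sr 0 = _
        rw [sr_mul_r, sr_mul_sr]
        ring_nf
      have h1 : (x⁻¹ * S * x) * (x⁻¹ * R * x) * (x⁻¹ * S * x)⁻¹ = (x⁻¹ * R * x)⁻¹ := by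
        have e1 : (x⁻¹ * S * x) * (x⁻¹ * R * x) * (x⁻¹ * S * x)⁻¹ = x⁻¹ * (S * R * S⁻¹) * x := by
          group
        rw [e1, hSRS]; group
      have h2 : r j * r i * (r j)⁻¹ = (r i)⁻¹ := by
        apply hinj
        rw [map_mul, map_mul, map_inv, map_inv, hi, haj]
        exact h1
      have h3 : r j * r i * (r j)⁻¹ = r i := by
        show r j * r i * r (-j) = r i
        rw [r_mul_r, r_mul_r]; ring_nf
      rw [h3] at h2
      have h5 : (r i : DihedralGroup n) ^ 2 = 1 := by
        rw [pow_two]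
        nth_rewrite 2 [h2]
        simp
      have hdvd := orderOf_dvd_of_pow_eq_one h5
      rw [oi] at hdvd
      have := Nat.le_of_dvd (by norm_num) hdvd
      omega
  -- even rotations lie in the commutator subgroup
  have hcommRS : f (r (2 : ZMod n)) = ⁅R, S⁆ := by
    rw [hRdef, hSdef, ← map_commutatorElement]
    congr 1
    show _ = r 1 * sr 0 * (r 1)⁻¹ * (sr 0)⁻¹
    show _ = r 1 * sr 0 * r (-1) * sr 0
    rw [r_mul_sr, sr_mul_r, sr_mul_sr]
    ring_nf
  have heven : ∀ z : ZMod n, 2 ∣ z.val → f (r z) ∈ ⁅D, D⁆ := by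
    rintro z ⟨t, ht⟩
    have hz : z = (t : ZMod n) * 2 := by
      have h1 := congrArg (Nat.cast : ℕ → ZMod n) ht
      rw [aux_val] at h1
      rw [h1]; push_cast; ring
    have h2 : f (r z) = ⁅R, S⁆ ^ t := by
      rw [← hcommRS, ← map_pow, aux_r_pow, hz]
    rw [h2]
    exact Subgroup.pow_mem _ (Subgroup.commutator_mem_commutator hR hS) t
  have hval2 : ∀ z : ZMod n, (z.val : ZMod 2) = ZMod.castHom hn2 (ZMod 2) z := by
    intro z
    rw [ZMod.castHom_apply, ZMod.natCast_val]
  have hval4 : ∀ z : ZMod n, ZMod.castHom h4 (ZMod 4) z = ((z.val : ℕ) : ZMod 4) := by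
    intro z
    rw [ZMod.castHom_apply, ZMod.natCast_val]
  have hfr : ∀ a : ZMod n, f (r a) = R ^ a.val := by
    intro a
    rw [hRdef, ← map_pow, aux_r_pow]
    congr 1
    rw [mul_one, aux_val]
  have hfsr : ∀ a : ZMod n, f (sr a) = S * R ^ a.val := by
    intro a
    rw [hRdef, hSdef, ← map_pow, ← map_mul, aux_r_pow, mul_one, sr_mul_r, zero_add,
      aux_val]
  have hconjpow : ∀ (g : E) (k : ℕ), x⁻¹ * g ^ k * x = (x⁻¹ * g * x) ^ k := by
    intro g k
    induction k with
    | zero => group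
    | succ k ih => rw [pow_succ, pow_succ, ← ih]; group
  obtain ⟨c, hc⟩ := hmem _ (Subgroup.sq_mem_of_index_two hD x)
  have h40 : (4 : ZMod 4) = 0 := by decide
  cases c with
  | sr m =>
    exfalso
    have E1 : x⁻¹ * (x⁻¹ * R * x) * x = (x ^ 2)⁻¹ * R * (x ^ 2) := by
      rw [pow_two, mul_inv_rev]; group
    rw [← hi] at E1
    have hL : x⁻¹ * f (r i) * x = f (r (i * i)) := by
      rw [hfr i, hconjpow, ← hi, ← map_pow, aux_r_pow, aux_val]
    have hRhs : (x ^ 2)⁻¹ * R * (x ^ 2) = f (r (-1)) := by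
      rw [← hc, hRdef, ← map_inv, ← map_mul, ← map_mul]
      congr 1
      show (sr m)⁻¹ * r 1 * sr m = _
      show sr m * r 1 * sr m = _
      rw [sr_mul_r, sr_mul_sr]
      ring_nf
    rw [hL, hRhs] at E1
    have hii : i * i = -1 := by
      have := hinj E1
      simpa using this
    obtain ⟨s, hs⟩ : ∃ s, i.val = 2 * s + 1 := ⟨i.val / 2, by omega⟩
    have hcast := congrArg (ZMod.castHom h4 (ZMod 4)) hii
    rw [map_mul, map_neg, map_one, hval4, hs] at hcast
    push_cast at hcast
    have h2 : (2 : ZMod 4) = 0 := by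
      linear_combination hcast - ((s : ZMod 4) ^ 2 + s) * h40
    exact absurd h2 (by decide)
  | r m =>
    rcases Nat.even_or_odd m.val with hmev | hmodd
    · refine ⟨x, hx, ?_⟩
      rw [← hc]
      exact heven m hmev.two_dvd
    · rw [Nat.odd_iff] at hmodd
      rcases Nat.even_or_odd j.val with hjev | hjodd
      · exfalso
        rw [Nat.even_iff] at hjev
        have E2 : x⁻¹ * (x⁻¹ * S * x) * x = (x ^ 2)⁻¹ * S * (x ^ 2) := by
          rw [pow_two, mul_inv_rev]; group
        rw [← hj] at E2
        have hL : x⁻¹ * f (sr j) * x = f (sr (j + j * i)) := by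
          rw [hfsr j]
          have e1 : x⁻¹ * (S * R ^ j.val) * x = (x⁻¹ * S * x) * (x⁻¹ * R ^ j.val * x) := by
            group
          rw [e1, hconjpow, ← hi, ← hj, ← map_pow, aux_r_pow, ← map_mul]
          congr 1
          rw [sr_mul_r, aux_val]
        have hRhs : (x ^ 2)⁻¹ * S * (x ^ 2) = f (sr (m + m)) := by
          rw [← hc, hSdef, ← map_inv, ← map_mul, ← map_mul]
          congr 1
          show (r m)⁻¹ * sr 0 * r m = _
          show r (-m) * sr 0 * r m = _
          rw [r_mul_sr, sr_mul_r]
          ring_nf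
        rw [hL, hRhs] at E2
        have heq : j + j * i = m + m := by
          have := hinj E2
          simpa using this
        obtain ⟨p, hp⟩ : ∃ p, m.val = 2 * p + 1 := ⟨m.val / 2, by omega⟩
        obtain ⟨q, hq⟩ : ∃ q, j.val = 2 * q := ⟨j.val / 2, by omega⟩
        obtain ⟨s, hs⟩ : ∃ s, i.val = 2 * s + 1 := ⟨i.val / 2, by omega⟩
        have hcast := congrArg (ZMod.castHom h4 (ZMod 4)) heq
        rw [map_add, map_add, map_mul, hval4, hval4, hval4, hp, hq, hs] at hcast
        push_cast at hcast
        have h2 : (2 : ZMod 4) = 0 := by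
          linear_combination ((q : ZMod 4) + q * s - p) * h40 - hcast
        exact absurd h2 (by decide)
      · rw [Nat.odd_iff] at hjodd
        refine ⟨x * S, ?_, ?_⟩
        · rw [key2]; tauto
        · have hy2 : (x * S) ^ 2 = x ^ 2 * (x⁻¹ * S * x) * S := by
            rw [pow_two]; group
          rw [hy2, ← hc, ← hj, hSdef, ← map_mul, ← map_mul]
          have e1 : r m * sr j * sr 0 = r (m - j) := by
            rw [r_mul_sr, sr_mul_sr]
            ring_nf
          rw [e1]
          apply heven
          have h20 : (2 : ZMod 2) = 0 := by decide
          rw [← ZMod.natCast_eq_zero_iff, hval2, map_sub, ← hval2, ← hval2]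
          obtain ⟨p, hp⟩ : ∃ p, m.val = 2 * p + 1 := ⟨m.val / 2, by omega⟩
          obtain ⟨q, hq⟩ : ∃ q, j.val = 2 * q + 1 := ⟨j.val / 2, by omega⟩
          rw [hp, hq]
          push_cast
          linear_combination ((p : ZMod 2) - q) * h20

/-- Let `d ≥ 3` and let `E` be a finite group having a subgroup `D` of index `2` with `D`
isomorphic to the dihedral group of order `2^d`.  Let `D' = ⁅D, D⁆` be the commutator
subgroup of `D`; then `D'` is normal in `E`, and in the quotient group `E/D'` the image
of `D` has a complement (i.e. the extension `1 → D/D' → E/D' → C₂ → 1` splits). -/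
theorem dihedral_index_two_extension_splits_mod_commutator (d : ℕ) (hd : 3 ≤ d)
    (E : Type*) [Group E] [Finite E] (D : Subgroup E) (hD : D.index = 2)
    (hiso : Nonempty (D ≃* DihedralGroup (2 ^ (d - 1)))) :
    ∃ hN : (⁅D, D⁆ : Subgroup E).Normal,
      haveI := hN
      ∃ C : Subgroup (E ⧸ (⁅D, D⁆ : Subgroup E)),
        Subgroup.IsComplement'
          (D.map (QuotientGroup.mk' (⁅D, D⁆ : Subgroup E))) C := by
  classical
  have key2 : ∀ a b : E, a * b ∈ D ↔ (a ∈ D ↔ b ∈ D) := fun a b =>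
    Subgroup.mul_mem_iff_of_index_two hD
  haveI hDn : D.Normal := by
    constructor
    intro g hg x
    have h1 := key2 x g
    have h2 := key2 (x * g) x⁻¹
    have h3 : x⁻¹ ∈ D ↔ x ∈ D := D.inv_mem_iff
    by_cases hxD : x ∈ D <;> tauto
  haveI hN : (⁅D, D⁆ : Subgroup E).Normal := Subgroup.commutator_normal D D
  refine ⟨hN, ?_⟩
  -- build the embedding of the dihedral group onto D
  set n := 2 ^ (d - 1) with hn
  haveI : NeZero n := ⟨pow_ne_zero _ two_ne_zero⟩
  have h4 : 4 ∣ n := by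
    have : (2 : ℕ) ^ 2 ∣ 2 ^ (d - 1) := pow_dvd_pow 2 (by omega)
    simpa using this
  obtain ⟨e⟩ := hiso
  set f : DihedralGroup n →* E := D.subtype.comp e.symm.toMonoidHom with hf
  have hinj : Function.Injective f :=
    D.subtype_injective.comp e.symm.injective
  have hrange : f.range = D := by
    ext g
    constructor
    · rintro ⟨a, rfl⟩
      exact (e.symm a).2
    · intro hg
      exact ⟨e ⟨g, hg⟩, by simp [hf]⟩
  obtain ⟨x, hx, hx2⟩ := exists_sq_mem_commutator h4 D hD f hinj hrange
  -- the complement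
  have hsub : (⁅D, D⁆ : Subgroup E) ≤ D := by
    rw [Subgroup.commutator_le]
    intro g₁ h₁ g₂ h₂
    exact D.mul_mem (D.mul_mem (D.mul_mem h₁ h₂) (D.inv_mem h₁)) (D.inv_mem h₂)
  set π := QuotientGroup.mk' (⁅D, D⁆ : Subgroup E) with hπ
  set c := π x with hc
  have hc2 : c ^ 2 = 1 := by
    rw [hc, ← map_pow]
    exact (QuotientGroup.eq_one_iff _).mpr hx2
  have hcinv : c⁻¹ = c := by
    rw [← mul_one c⁻¹, ← hc2]
    group
  set V := D.map π with hV
  have hmemV : ∀ y : E, π y ∈ V ↔ y ∈ D := by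
    intro y
    constructor
    · rintro ⟨d', hd', hdy⟩
      have : d'⁻¹ * y ∈ π.ker := by
        rw [MonoidHom.mem_ker, map_mul, map_inv, hdy]
        group
      rw [hπ, QuotientGroup.ker_mk'] at this
      have := hsub this
      have : d' * (d'⁻¹ * y) ∈ D := D.mul_mem hd' this
      simpa using this
    · intro hy
      exact ⟨y, hy, rfl⟩
  have hcV : c ∉ V := fun h => hx ((hmemV x).mp h)
  refine ⟨Subgroup.zpowers c, ?_⟩
  have hzp : ∀ w ∈ Subgroup.zpowers c, w = 1 ∨ w = c := by
    intro w hw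
    obtain ⟨k, hk⟩ := Subgroup.mem_zpowers_iff.mp hw
    have hsplit : c ^ k = c ^ (2 * (k / 2) + k % 2) := by rw [Int.mul_ediv_add_emod]
    have h2z : c ^ (2 : ℤ) = 1 := by rw [show (2:ℤ) = ((2:ℕ):ℤ) by norm_num, zpow_natCast, hc2]
    rw [zpow_add, zpow_mul, h2z, one_zpow, one_mul] at hsplit
    have : k % 2 = 0 ∨ k % 2 = 1 := Int.emod_two_eq_zero_or_one k
    rcases this with h | h
    · left; rw [← hk, hsplit, h, zpow_zero]
    · right; rw [← hk, hsplit, h, zpow_one]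
  rw [Subgroup.isComplement'_def, Subgroup.isComplement_iff_existsUnique]
  intro g
  obtain ⟨y, rfl⟩ : ∃ y, π y = g := QuotientGroup.mk'_surjective _ g
  by_cases hy : y ∈ D
  · refine ⟨⟨⟨π y, (hmemV y).mpr hy⟩, 1⟩, by simp, ?_⟩
    rintro ⟨⟨v, hv⟩, ⟨w, hw⟩⟩ heq
    simp only at heq
    rcases hzp w hw with rfl | rfl
    · have : v = π y := by simpa using heq
      simp [this]
    · exfalso
      apply hcV
      have : c = v⁻¹ * π y := by rw [← heq]; group
      rw [this]
      exact V.mul_mem (V.inv_mem hv) ((hmemV y).mpr hy)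
  · have hyx : y * x ∈ D := by rw [key2]; tauto
    have hgc : π y * c ∈ V := by
      rw [hc, ← map_mul]
      exact (hmemV _).mpr hyx
    refine ⟨⟨⟨π y * c, hgc⟩, ⟨c, Subgroup.mem_zpowers c⟩⟩, ?_, ?_⟩
    · show π y * c * c = π y
      rw [mul_assoc, ← pow_two, hc2, mul_one]
    · rintro ⟨⟨v, hv⟩, ⟨w, hw⟩⟩ heq
      simp only at heq
      rcases hzp w hw with rfl | rfl
      · exfalso
        rw [mul_one] at heq
        rw [heq] at hv
        exact hy ((hmemV y).mp hv)
      · have : v = π y * c := by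
          rw [← heq, mul_assoc, ← pow_two, hc2, mul_one]
        simp [this]
end

section
/- Let d ≥ 4 and let D be the dihedral group of order 2^d. Then the outer automorphism group of D, i.e. the quotient of Aut(D) by the image of the conjugation homomorphism D → Aut(D) (the inner automorphism group), is isomorphic to C₂ × C_{2^{d−3}}. -/
/-- The inner automorphism group (the range of the conjugation homomorphism
`G →* MulAut G`) is a normal subgroup of the automorphism group. -/
instance innerAutNormal (G : Type*) [Group G] :
    ((MulAut.conj : G →* MulAut G).range).Normal := by
  constructor
  rintro f ⟨g, rfl⟩ φ
  refine ⟨φ g, ?_⟩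
  ext x
  simp [MulAut.conj_apply, MulAut.mul_apply, map_mul, MulAut.inv_apply_self,
    ← map_inv]

open DihedralGroup

namespace OutDihedral

/-! ### Generalities on dihedral groups and their automorphisms -/

variable {n : ℕ}

lemma r_pow (j : ZMod n) (t : ℕ) : (r j : DihedralGroup n) ^ t = r ((t : ZMod n) * j) := by
  induction t with
  | zero => rw [pow_zero, Nat.cast_zero, zero_mul]; rfl
  | succ t ih => rw [pow_succ, ih, r_mul_r]; push_cast; ring_nf

lemma r_inv (a : ZMod n) : (r a : DihedralGroup n)⁻¹ = r (-a) :=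
  inv_eq_of_mul_eq_one_right (by rw [r_mul_r, add_neg_cancel, ← one_def])

lemma sr_inv (a : ZMod n) : (sr a : DihedralGroup n)⁻¹ = sr a :=
  inv_eq_of_mul_eq_one_right (sr_mul_self a)

variable [NeZero n]

lemma r_eq (i : ZMod n) : (r i : DihedralGroup n) = r 1 ^ i.val := by
  rw [r_pow, mul_one, ZMod.natCast_val, ZMod.cast_id]

lemma sr_eq (i : ZMod n) : (sr i : DihedralGroup n) = sr 0 * r 1 ^ i.val := by
  rw [r_pow, mul_one, ZMod.natCast_val, ZMod.cast_id, sr_mul_r, zero_add]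

/-- automorphisms agreeing on `r 1` and `sr 0` are equal -/
lemma mulAut_ext {φ ψ : MulAut (DihedralGroup n)} (h1 : φ (r 1) = ψ (r 1))
    (h0 : φ (sr 0) = ψ (sr 0)) : φ = ψ := by
  ext x
  cases x with
  | r i => rw [r_eq, map_pow, map_pow, h1]
  | sr i => rw [sr_eq, map_mul, map_mul, map_pow, map_pow, h1, h0]

lemma map_r {φ : MulAut (DihedralGroup n)} {k : ZMod n} (h : φ (r 1) = r k) (i : ZMod n) :
    φ (r i) = r (k * i) := by
  rw [r_eq, map_pow, h, r_pow, ZMod.natCast_val, ZMod.cast_id, mul_comm]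

lemma map_sr {φ : MulAut (DihedralGroup n)} {k m : ZMod n} (h : φ (r 1) = r k)
    (h0 : φ (sr 0) = sr m) (i : ZMod n) : φ (sr i) = sr (m + k * i) := by
  rw [sr_eq, map_mul, map_pow, h, h0, r_pow, ZMod.natCast_val, ZMod.cast_id, sr_mul_r, mul_comm]

/-- The explicit automorphism of the dihedral group sending `r i` to `r (k i)` and
`sr i` to `sr (m + k i)`. -/
def dAut (k : (ZMod n)ˣ) (m : ZMod n) : MulAut (DihedralGroup n) where
  toFun x := match x with
    | DihedralGroup.r i => r (k * i)
    | DihedralGroup.sr i => sr (m + k * i)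
  invFun x := match x with
    | DihedralGroup.r i => r ((k⁻¹ : (ZMod n)ˣ) * i)
    | DihedralGroup.sr i => sr ((k⁻¹ : (ZMod n)ˣ) * (i - m))
  left_inv := by
    rintro (i | i) <;> simp [← mul_assoc, Units.inv_mul, Units.mul_inv]
  right_inv := by
    rintro (i | i) <;> simp [← mul_assoc, Units.inv_mul, Units.mul_inv, mul_sub]
  map_mul' := by
    rintro (i | i) (j | j) <;> simp <;> ring_nf

@[simp] lemma dAut_r (k : (ZMod n)ˣ) (m i : ZMod n) : dAut k m (r i) = r ((k : ZMod n) * i) := rfl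

@[simp] lemma dAut_sr (k : (ZMod n)ˣ) (m i : ZMod n) : dAut k m (sr i) = sr (m + (k : ZMod n) * i) := rfl

lemma exists_km (hn : 2 < n) (φ : MulAut (DihedralGroup n)) :
    ∃ km : (ZMod n)ˣ × ZMod n, φ (r 1) = r ↑km.1 ∧ φ (sr 0) = sr km.2 := by
  have horder : orderOf (φ (r 1)) = n := by
    have h1 : orderOf (φ (r 1)) = orderOf (r 1 : DihedralGroup n) :=
      orderOf_injective φ.toMonoidHom φ.injective _
    rw [h1, orderOf_r_one]
  obtain ⟨k, hk⟩ : ∃ k : (ZMod n)ˣ, φ (r 1) = r ↑k := by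
    cases h : φ (r 1) with
    | r k =>
      rw [h, orderOf_r] at horder
      have hg : Nat.gcd n k.val = 1 := by
        rcases (Nat.div_eq_self.mp horder) with h' | h'
        · exact absurd h' (NeZero.ne n)
        · exact h'
      have hc : Nat.Coprime k.val n := Nat.coprime_comm.mp hg
      refine ⟨ZMod.unitOfCoprime k.val hc, ?_⟩
      rw [ZMod.coe_unitOfCoprime, ZMod.natCast_val, ZMod.cast_id]
    | sr k =>
      rw [h, orderOf_sr] at horder
      omega
  cases h0 : φ (sr 0) with
  | sr m => exact ⟨(k, m), hk, rfl⟩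
  | r j =>
    exfalso
    obtain ⟨x, hx⟩ := φ.surjective (sr 0)
    cases x with
    | r i => rw [map_r hk] at hx; cases hx
    | sr i =>
      rw [sr_eq, map_mul, map_pow, hk, h0, r_pow] at hx
      cases hx

/-- the parameters `(k, m)` of an automorphism -/
noncomputable def km (hn : 2 < n) (φ : MulAut (DihedralGroup n)) : (ZMod n)ˣ × ZMod n :=
  (exists_km hn φ).choose

lemma km_spec (hn : 2 < n) (φ : MulAut (DihedralGroup n)) :
    φ (r 1) = r ↑(km hn φ).1 ∧ φ (sr 0) = sr (km hn φ).2 :=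
  (exists_km hn φ).choose_spec

lemma km_eq (hn : 2 < n) {φ : MulAut (DihedralGroup n)} {k : (ZMod n)ˣ} {m : ZMod n}
    (h1 : φ (r 1) = r ↑k) (h2 : φ (sr 0) = sr m) : km hn φ = (k, m) := by
  obtain ⟨s1, s2⟩ := km_spec hn φ
  have hk : ((km hn φ).1 : ZMod n) = ↑k := by injection s1.symm.trans h1
  have hm : (km hn φ).2 = m := by injection s2.symm.trans h2
  exact Prod.ext (Units.ext hk) hm

lemma km_mul (hn : 2 < n) (φ ψ : MulAut (DihedralGroup n)) :
    km hn (φ * ψ) =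
      ((km hn φ).1 * (km hn ψ).1, (km hn φ).2 + ↑(km hn φ).1 * (km hn ψ).2) := by
  obtain ⟨a1, a2⟩ := km_spec hn φ
  obtain ⟨b1, b2⟩ := km_spec hn ψ
  apply km_eq
  · show φ (ψ (r 1)) = _
    rw [b1, map_r a1, Units.val_mul]
  · show φ (ψ (sr 0)) = _
    rw [b2, map_sr a1 a2]

lemma km_one (hn : 2 < n) : km hn (1 : MulAut (DihedralGroup n)) = (1, 0) := by
  apply km_eq <;> simp

lemma km_dAut (hn : 2 < n) (k : (ZMod n)ˣ) (m : ZMod n) : km hn (dAut k m) = (k, m) := by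
  apply km_eq <;> simp

lemma conj_r_r (a : ZMod n) : MulAut.conj (r a : DihedralGroup n) (r 1) = r 1 := by
  rw [MulAut.conj_apply, r_inv, r_mul_r, r_mul_r]
  congr 1
  ring

lemma conj_r_sr (a : ZMod n) : MulAut.conj (r a : DihedralGroup n) (sr 0) = sr (-(2 * a)) := by
  rw [MulAut.conj_apply, r_inv, r_mul_sr, sr_mul_r]
  congr 1
  ring

lemma conj_sr_r (a : ZMod n) :
    MulAut.conj (sr a : DihedralGroup n) (r 1) = r ↑(-1 : (ZMod n)ˣ) := by
  rw [MulAut.conj_apply, sr_inv, sr_mul_r, sr_mul_sr, Units.coe_neg_one]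
  congr 1
  ring

lemma conj_sr_sr (a : ZMod n) : MulAut.conj (sr a : DihedralGroup n) (sr 0) = sr (2 * a) := by
  rw [MulAut.conj_apply, sr_inv, sr_mul_sr, r_mul_sr]
  congr 1
  ring

/-! ### `±1` inside the units of `ZMod n` -/

lemma mem_zpowers_neg_one {u : (ZMod n)ˣ} :
    u ∈ Subgroup.zpowers (-1 : (ZMod n)ˣ) ↔ u = 1 ∨ u = -1 := by
  constructor
  · rintro ⟨z, rfl⟩
    rcases Int.even_or_odd z with hz | hz
    · left
      obtain ⟨c, rfl⟩ := hz
      show (-1 : (ZMod n)ˣ) ^ (c + c) = 1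
      rw [zpow_add, ← mul_zpow]
      norm_num
    · right
      obtain ⟨c, rfl⟩ := hz
      show (-1 : (ZMod n)ˣ) ^ (2 * c + 1) = -1
      rw [zpow_add, zpow_mul, zpow_one]
      rw [show ((-1 : (ZMod n)ˣ) ^ (2:ℤ)) = 1 by rw [zpow_two, neg_mul_neg, one_mul], one_zpow,
        one_mul]
  · rintro (rfl | rfl)
    · exact ⟨0, by simp⟩
    · exact ⟨1, by simp⟩

lemma even_of_cast_eq_zero (h2 : 2 ∣ n) {m : ZMod n}
    (h : ZMod.castHom h2 (ZMod 2) m = 0) : ∃ t : ZMod n, m = 2 * t := by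
  have hval : ((m.val : ℕ) : ZMod 2) = 0 := by
    rw [ZMod.natCast_val, ← ZMod.castHom_apply (h := h2)]
    exact h
  rw [ZMod.natCast_eq_zero_iff] at hval
  obtain ⟨t, ht⟩ := hval
  refine ⟨(t : ℕ), ?_⟩
  have hm : m = ((m.val : ℕ) : ZMod n) := by rw [ZMod.natCast_val, ZMod.cast_id]
  rw [hm, ht]
  push_cast
  ring

lemma isUnit_zmod_two_eq_one : ∀ x : ZMod 2, IsUnit x → x = 1 := by decide

lemma zmod_two_ne_zero_eq_one : ∀ x : ZMod 2, x ≠ 0 → x = 1 := by decide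

/-! ### The homomorphism from `Aut(D)` detecting outer automorphisms -/

/-- The homomorphism recording `m mod 2` and the class of `k` modulo `±1`. -/
noncomputable def Fhom (hn : 2 < n) (h2 : 2 ∣ n) :
    MulAut (DihedralGroup n) →*
      Multiplicative (ZMod 2) × ((ZMod n)ˣ ⧸ Subgroup.zpowers (-1 : (ZMod n)ˣ)) where
  toFun φ := (Multiplicative.ofAdd (ZMod.castHom h2 (ZMod 2) (km hn φ).2),
    QuotientGroup.mk (km hn φ).1)
  map_one' := by
    rw [km_one hn]
    simp
  map_mul' φ ψ := by
    rw [km_mul hn φ ψ]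
    have hcast : (ZMod.castHom h2 (ZMod 2)) ((km hn φ).1 : ZMod n) = 1 :=
      isUnit_zmod_two_eq_one _ (((km hn φ).1.isUnit).map _)
    refine Prod.ext ?_ ?_
    · show Multiplicative.ofAdd _ = Multiplicative.ofAdd _ * Multiplicative.ofAdd _
      rw [← ofAdd_add]
      congr 1
      rw [map_add, map_mul, hcast, one_mul]
    · rfl

lemma Fhom_surjective (hn : 2 < n) (h2 : 2 ∣ n) : Function.Surjective (Fhom hn h2) := by
  rintro ⟨x, q⟩
  obtain ⟨u, rfl⟩ := QuotientGroup.mk_surjective q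
  set c : ZMod 2 := Multiplicative.toAdd x with hc
  refine ⟨dAut u (if c = 0 then 0 else 1), ?_⟩
  show (Multiplicative.ofAdd (ZMod.castHom h2 (ZMod 2) (km hn _).2),
    (QuotientGroup.mk (km hn _).1 : _ ⧸ _)) = (x, _)
  rw [km_dAut hn]
  refine Prod.ext ?_ rfl
  show Multiplicative.ofAdd (ZMod.castHom h2 (ZMod 2) (if c = 0 then 0 else 1)) = x
  have : ZMod.castHom h2 (ZMod 2) (if c = 0 then (0 : ZMod n) else 1) = c := by
    by_cases hc0 : c = 0
    · simp [hc0]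
    · rw [if_neg hc0, map_one, (zmod_two_ne_zero_eq_one c hc0)]
  rw [this, hc, ofAdd_toAdd]

lemma range_conj_eq_ker (hn : 2 < n) (h2 : 2 ∣ n) :
    (MulAut.conj : DihedralGroup n →* MulAut (DihedralGroup n)).range = (Fhom hn h2).ker := by
  ext φ
  constructor
  · rintro ⟨g, rfl⟩
    rw [MonoidHom.mem_ker]
    cases g with
    | r a =>
      have hkm : km hn (MulAut.conj (r a)) = (1, -(2 * a)) :=
        km_eq hn (by rw [conj_r_r, Units.val_one]) (conj_r_sr a)
      show (Multiplicative.ofAdd _, (QuotientGroup.mk _ : _ ⧸ _)) = 1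
      rw [hkm]
      refine Prod.ext ?_ ?_
      · show Multiplicative.ofAdd (ZMod.castHom h2 (ZMod 2) (-(2 * a))) = 1
        have : ZMod.castHom h2 (ZMod 2) (-(2 * a)) = 0 := by
          rw [map_neg, map_mul]
          have h20 : (ZMod.castHom h2 (ZMod 2)) (2 : ZMod n) = 0 := by
            rw [map_ofNat]
            decide
          rw [h20, zero_mul, neg_zero]
        rw [this]
        rfl
      · show (QuotientGroup.mk (1 : (ZMod n)ˣ) : _ ⧸ _) = 1
        rw [QuotientGroup.mk_one]
    | sr a =>
      have hkm : km hn (MulAut.conj (sr a)) = (-1, 2 * a) :=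
        km_eq hn (conj_sr_r a) (conj_sr_sr a)
      show (Multiplicative.ofAdd _, (QuotientGroup.mk _ : _ ⧸ _)) = 1
      rw [hkm]
      refine Prod.ext ?_ ?_
      · show Multiplicative.ofAdd (ZMod.castHom h2 (ZMod 2) (2 * a)) = 1
        have : ZMod.castHom h2 (ZMod 2) (2 * a) = 0 := by
          rw [map_mul]
          have h20 : (ZMod.castHom h2 (ZMod 2)) (2 : ZMod n) = 0 := by
            rw [map_ofNat]
            decide
          rw [h20, zero_mul]
        rw [this]
        rfl
      · show (QuotientGroup.mk (-1 : (ZMod n)ˣ) : _ ⧸ _) = 1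
        rw [QuotientGroup.eq_one_iff]
        exact Subgroup.mem_zpowers _
  · intro hφ
    rw [MonoidHom.mem_ker] at hφ
    obtain ⟨s1, s2⟩ := km_spec hn φ
    have h1 : Multiplicative.ofAdd (ZMod.castHom h2 (ZMod 2) (km hn φ).2) = 1 :=
      congrArg Prod.fst hφ
    have hq : (QuotientGroup.mk (km hn φ).1 : _ ⧸ Subgroup.zpowers (-1 : (ZMod n)ˣ)) = 1 :=
      congrArg Prod.snd hφ
    rw [QuotientGroup.eq_one_iff, mem_zpowers_neg_one] at hq
    have hm0 : ZMod.castHom h2 (ZMod 2) (km hn φ).2 = 0 := h1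
    obtain ⟨t, ht⟩ := even_of_cast_eq_zero h2 hm0
    rcases hq with hk | hk
    · refine ⟨r (-t), ?_⟩
      apply mulAut_ext
      · rw [conj_r_r, s1, hk, Units.val_one]
      · rw [conj_r_sr, s2, ht]
        congr 1
        ring
    · refine ⟨sr t, ?_⟩
      apply mulAut_ext
      · rw [conj_sr_r, s1, hk]
      · rw [conj_sr_sr, s2, ht]


/-! ### units of `ZMod (2^e)` -/

section Units


lemma five_pow (t : ℕ) : ∃ u : ℕ, Odd u ∧ 5 ^ (2 ^ t) = 1 + 2 ^ (t + 2) * u := by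
  induction t with
  | zero => exact ⟨1, odd_one, by norm_num⟩
  | succ t ih =>
    obtain ⟨u, hu, h⟩ := ih
    refine ⟨u + 2 ^ (t + 1) * u ^ 2, ?_, ?_⟩
    · rcases hu with ⟨v, rfl⟩
      exact ⟨v + 2 ^ t * (2 * v + 1) ^ 2, by ring⟩
    · have : 5 ^ 2 ^ (t + 1) = (5 ^ 2 ^ t) ^ 2 := by
        rw [← pow_mul, pow_succ]
      rw [this, h]; ring

variable {e : ℕ} (he : 3 ≤ e)

lemma five_pow_zmod (he : 3 ≤ e) :
    (5 : ZMod (2 ^ e)) ^ (2 ^ (e - 3)) = 1 + 2 ^ (e - 1) := by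
  obtain ⟨u, ⟨v, rfl⟩, h⟩ := five_pow (e - 3)
  have h3 : e - 3 + 2 = e - 1 := by omega
  have : ((5 : ℕ) : ZMod (2 ^ e)) ^ (2 ^ (e - 3)) =
      ((1 + 2 ^ (e - 1) * (2 * v + 1) : ℕ) : ZMod (2 ^ e)) := by
    rw [← Nat.cast_pow, h, h3]
  push_cast at this
  have h2e : ((2 : ZMod (2 ^ e)) ^ (e - 1)) * (2 * (v : ZMod (2 ^ e))) = 0 := by
    have : ((2 ^ e : ℕ) : ZMod (2 ^ e)) = 0 := ZMod.natCast_self _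
    push_cast at this
    calc (2 : ZMod (2 ^ e)) ^ (e - 1) * (2 * v) = 2 ^ (e - 1 + 1) * v := by ring
    _ = 2 ^ e * v := by rw [show e - 1 + 1 = e by omega]
    _ = 0 := by rw [this, zero_mul]
  calc (5 : ZMod (2 ^ e)) ^ (2 ^ (e - 3))
      = 1 + 2 ^ (e - 1) * (2 * v + 1) := by exact_mod_cast this
    _ = 1 + 2 ^ (e - 1) + 2 ^ (e - 1) * (2 * v) := by ring
    _ = 1 + 2 ^ (e - 1) := by rw [h2e, add_zero]

/-- `5` as a unit mod `2^e`. -/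
def fiveUnit (e : ℕ) : (ZMod (2 ^ e))ˣ :=
  ZMod.unitOfCoprime 5 (Nat.Coprime.pow_right _ (by norm_num))

lemma fiveUnit_coe : ((fiveUnit e : (ZMod (2 ^ e))ˣ) : ZMod (2 ^ e)) = 5 := by
  simp [fiveUnit]

lemma pow_ne_one (he : 3 ≤ e) :
    (5 : ZMod (2 ^ e)) ^ (2 ^ (e - 3)) ≠ 1 := by
  rw [five_pow_zmod he]
  intro h
  have : ((2 ^ (e - 1) : ℕ) : ZMod (2 ^ e)) = 0 := by
    have := add_left_cancel (a := (1 : ZMod (2^e))) (by rw [h, add_zero] : (1 : ZMod (2^e)) + 2 ^ (e-1) = 1 + 0)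
    push_cast
    exact this
  rw [ZMod.natCast_eq_zero_iff] at this
  have := Nat.le_of_dvd (by positivity) this
  have := Nat.pow_lt_pow_right (a := 2) one_lt_two (show e - 1 < e by omega)
  omega

lemma pow_ne_neg_one (he : 3 ≤ e) :
    (5 : ZMod (2 ^ e)) ^ (2 ^ (e - 3)) ≠ -1 := by
  rw [five_pow_zmod he]
  intro h
  have h0 : ((2 + 2 ^ (e - 1) : ℕ) : ZMod (2 ^ e)) = 0 := by
    push_cast
    have : (1 : ZMod (2^e)) + 2 ^ (e-1) + 1 = 0 := by rw [h]; ring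
    linear_combination this
  rw [ZMod.natCast_eq_zero_iff] at h0
  have hle := Nat.le_of_dvd (by positivity) h0
  have h1 : 2 ^ (e - 1) < 2 ^ e := Nat.pow_lt_pow_right one_lt_two (by omega)
  have h2 : (4 : ℕ) ≤ 2 ^ (e - 1) := by
    calc (4:ℕ) = 2 ^ 2 := by norm_num
    _ ≤ 2 ^ (e - 1) := Nat.pow_le_pow_right (by norm_num) (by omega)
  have h3 : (2:ℕ) ^ e = 2 * 2 ^ (e - 1) := by
    rw [← pow_succ']; congr 1; omega
  omega



open Subgroup

variable {e : ℕ}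

/-- the subgroup `{±1}` of the units -/
def pmOne (e : ℕ) : Subgroup (ZMod (2 ^ e))ˣ := Subgroup.zpowers (-1)

lemma mem_pmOne_iff {u : (ZMod (2 ^ e))ˣ} : u ∈ pmOne e ↔ u = 1 ∨ u = -1 := by
  constructor
  · rintro ⟨z, rfl⟩
    rcases Int.even_or_odd z with hz | hz
    · left
      obtain ⟨c, rfl⟩ := hz
      show (-1 : (ZMod (2 ^ e))ˣ) ^ (c + c) = 1
      rw [zpow_add, ← mul_zpow]
      norm_num
    · right
      obtain ⟨c, rfl⟩ := hz
      show (-1 : (ZMod (2 ^ e))ˣ) ^ (2 * c + 1) = -1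
      rw [zpow_add, zpow_mul, zpow_one]
      norm_num
  · rintro (rfl | rfl)
    · exact ⟨0, by simp⟩
    · exact ⟨1, by simp⟩

lemma card_units (he : 3 ≤ e) : Nat.card (ZMod (2 ^ e))ˣ = 2 ^ (e - 1) := by
  haveI : NeZero (2 ^ e) := ⟨by positivity⟩
  rw [Nat.card_eq_fintype_card, ZMod.card_units_eq_totient,
    Nat.totient_prime_pow Nat.prime_two (by omega)]
  simp

lemma neg_one_ne_one (he : 3 ≤ e) : (-1 : (ZMod (2 ^ e))ˣ) ≠ 1 := by
  haveI : Fact (2 < 2 ^ e) := ⟨by calc 2 < 2^2 := by norm_num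
                                   _ ≤ 2 ^ e := Nat.pow_le_pow_right (by norm_num) (by omega)⟩
  intro h
  have : ((-1 : (ZMod (2^e))ˣ) : ZMod (2^e)) = ((1 : (ZMod (2^e))ˣ) : ZMod (2^e)) := by rw [h]
  simp only [Units.coe_neg_one, Units.val_one] at this
  exact ZMod.neg_one_ne_one this

lemma card_pmOne (he : 3 ≤ e) : Nat.card (pmOne e) = 2 := by
  haveI : Fact (2 < 2 ^ e) := ⟨by calc 2 < 2^2 := by norm_num
                                   _ ≤ 2 ^ e := Nat.pow_le_pow_right (by norm_num) (by omega)⟩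
  haveI : NeZero (2 ^ e) := ⟨by positivity⟩
  haveI : Fact (1 < 2 ^ e) := ⟨Nat.one_lt_two_pow_iff.mpr (by omega)⟩
  rw [pmOne, Nat.card_zpowers, ← orderOf_units, Units.coe_neg_one, orderOf_neg_one,
    ringChar.eq (ZMod (2 ^ e)) (2 ^ e)]
  rw [if_neg]
  intro h
  have := Fact.out (p := 2 < 2 ^ e)
  omega

lemma card_quot (he : 3 ≤ e) :
    Nat.card ((ZMod (2 ^ e))ˣ ⧸ pmOne e) = 2 ^ (e - 2) := by
  haveI : NeZero (2 ^ e) := ⟨by positivity⟩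
  have h := Subgroup.card_eq_card_quotient_mul_card_subgroup (pmOne e)
  rw [card_units he, card_pmOne he] at h
  have h2 : (2:ℕ) ^ (e - 1) = 2 ^ (e - 2) * 2 := by
    rw [← pow_succ]; congr 1; omega
  omega

lemma g_pow_ne_one (he : 3 ≤ e) :
    (QuotientGroup.mk (fiveUnit e) : (ZMod (2 ^ e))ˣ ⧸ pmOne e) ^ (2 ^ (e - 3)) ≠ 1 := by
  intro h
  rw [← QuotientGroup.mk_pow, QuotientGroup.eq_one_iff, mem_pmOne_iff] at h
  rcases h with h | h
  · apply pow_ne_one he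
    have : ((fiveUnit e ^ 2 ^ (e - 3) : (ZMod (2 ^ e))ˣ) : ZMod (2 ^ e)) = 1 := by
      rw [h, Units.val_one]
    rwa [Units.val_pow_eq_pow_val, fiveUnit_coe] at this
  · apply pow_ne_neg_one he
    have : ((fiveUnit e ^ 2 ^ (e - 3) : (ZMod (2 ^ e))ˣ) : ZMod (2 ^ e)) = -1 := by
      rw [h, Units.coe_neg_one]
    rwa [Units.val_pow_eq_pow_val, fiveUnit_coe] at this

lemma orderOf_g (he : 3 ≤ e) :
    orderOf (QuotientGroup.mk (fiveUnit e) : (ZMod (2 ^ e))ˣ ⧸ pmOne e) = 2 ^ (e - 2) := by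
  haveI : NeZero (2 ^ e) := ⟨by positivity⟩
  set g : (ZMod (2 ^ e))ˣ ⧸ pmOne e := QuotientGroup.mk (fiveUnit e) with hg
  have hdvd : orderOf g ∣ 2 ^ (e - 2) := by
    rw [← card_quot he]
    exact orderOf_dvd_natCard g
  obtain ⟨j, hj, hjeq⟩ := (Nat.dvd_prime_pow Nat.prime_two).mp hdvd
  rcases Nat.lt_or_ge j (e - 2) with hlt | hge
  · exfalso
    apply g_pow_ne_one he
    have h1 : g ^ (2 ^ j) = 1 := by rw [← hjeq]; exact pow_orderOf_eq_one g
    have h2 : (2:ℕ) ^ (e - 3) = 2 ^ j * 2 ^ (e - 3 - j) := by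
      rw [← pow_add]; congr 1; omega
    rw [h2, pow_mul, h1, one_pow]
  · rw [hjeq]; congr 1; omega

noncomputable def quotEquiv (he : 3 ≤ e) :
    ((ZMod (2 ^ e))ˣ ⧸ pmOne e) ≃* Multiplicative (ZMod (2 ^ (e - 2))) := by
  haveI : NeZero (2 ^ e) := ⟨by positivity⟩
  haveI : IsCyclic ((ZMod (2 ^ e))ˣ ⧸ pmOne e) :=
    isCyclic_of_orderOf_eq_card _ ((orderOf_g he).trans (card_quot he).symm)
  exact mulEquivOfCyclicCardEq (by
    rw [card_quot he]
    simp [Nat.card_eq_fintype_card])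


end Units

end OutDihedral

open OutDihedral in
/-- Let `d ≥ 4` and let `D` be the dihedral group of order `2^d`.  Then the outer
automorphism group of `D`, i.e. the quotient of `Aut(D)` by the image of the
conjugation homomorphism `D → Aut(D)`, is isomorphic to `C₂ × C_(2^(d-3))`. -/
theorem outer_automorphism_group_of_dihedral (d : ℕ) (hd : 4 ≤ d) :
    Nonempty
      ((MulAut (DihedralGroup (2 ^ (d - 1))) ⧸
          (MulAut.conj : DihedralGroup (2 ^ (d - 1)) →*
            MulAut (DihedralGroup (2 ^ (d - 1)))).range) ≃*
        Multiplicative (ZMod 2) × Multiplicative (ZMod (2 ^ (d - 3)))) := by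
  have he : 3 ≤ d - 1 := by omega
  haveI : NeZero (2 ^ (d - 1)) := ⟨by positivity⟩
  have hn : 2 < 2 ^ (d - 1) := by
    calc 2 < 2 ^ 2 := by norm_num
    _ ≤ 2 ^ (d - 1) := Nat.pow_le_pow_right (by norm_num) (by omega)
  have h2 : 2 ∣ 2 ^ (d - 1) := dvd_pow_self 2 (by omega)
  rw [show d - 3 = d - 1 - 2 by omega]
  exact ⟨(QuotientGroup.quotientMulEquivOfEq (range_conj_eq_ker hn h2)).trans
    ((QuotientGroup.quotientKerEquivOfSurjective
      (H := Multiplicative (ZMod 2) × ((ZMod (2 ^ (d - 1)))ˣ ⧸ Subgroup.zpowers (-1))) _ (Fhom_surjective hn h2)).trans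
      ((MulEquiv.refl (Multiplicative (ZMod 2))).prodCongr (quotEquiv he)))⟩
end

section
/- Let d ≥ 4 and let D = ⟨s, t ∣ s^{2^{d−1}} = t² = (st)² = 1⟩ be the dihedral group of order 2^d, with central involution s₁ = s^{2^{d−2}}. Then there is no group E containing D as a subgroup of index 2 together with an element e ∈ E ∖ D such that conjugation by e satisfies e s e⁻¹ = s₁ s⁻¹ and e t e⁻¹ = s⁻¹ t. Equivalently: no automorphism of D of the form s ↦ s^{2^{d−2}−1}, t ↦ s^{−1} t is induced by an element of a degree-2 extension of D. -/
open DihedralGroup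

private lemma r_inv' {n : ℕ} (c : ZMod n) : (r c : DihedralGroup n)⁻¹ = r (-c) := by
  apply inv_eq_of_mul_eq_one_right
  rw [r_mul_r, add_neg_cancel]
  exact one_def.symm

private lemma r_pow' {n : ℕ} (c : ZMod n) (k : ℕ) :
    (r c : DihedralGroup n) ^ k = r ((k : ZMod n) * c) := by
  induction k with
  | zero => simp [-r_zero, one_def]
  | succ k ih =>
    rw [pow_succ, ih, r_mul_r]
    congr 1
    push_cast
    ring

private lemma r_eq_pow {n : ℕ} [NeZero n] (c : ZMod n) :
    (r c : DihedralGroup n) = (r 1) ^ c.val := by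
  rw [r_one_pow, ZMod.natCast_val, ZMod.cast_id]

/-- Let `d ≥ 4` and let `D = ⟨s, t ∣ s^(2^(d-1)) = t² = (st)² = 1⟩` be the dihedral group
of order `2^d` (so `s = DihedralGroup.r 1`, `t = DihedralGroup.sr 0`), with central
involution `s₁ = s^(2^(d-2)) = DihedralGroup.r (2^(d-2))`.  Then there is no group `E`
containing `D` as a subgroup of index `2` together with an element `e ∈ E ∖ D` such that
conjugation by `e` satisfies `e s e⁻¹ = s₁ s⁻¹` and `e t e⁻¹ = s⁻¹ t`. -/
theorem no_degree_two_extension_with_forbidden_action (d : ℕ) (hd : 4 ≤ d) :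
    ¬ ∃ (E : Type) (_ : Group E) (ι : DihedralGroup (2 ^ (d - 1)) →* E) (e : E),
        Function.Injective ι ∧
        ι.range.index = 2 ∧
        e ∉ ι.range ∧
        e * ι (DihedralGroup.r 1) * e⁻¹ =
          ι (DihedralGroup.r ((2 ^ (d - 2) : ℕ) : ZMod (2 ^ (d - 1))) *
              (DihedralGroup.r 1)⁻¹) ∧
        e * ι (DihedralGroup.sr 0) * e⁻¹ =
          ι ((DihedralGroup.r 1)⁻¹ * DihedralGroup.sr 0) := by
  rintro ⟨E, _, ι, e, hinj, hidx, -, hs, ht⟩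
  have hn : NeZero (2 ^ (d - 1)) := ⟨pow_ne_zero _ two_ne_zero⟩
  set M : ZMod (2 ^ (d - 1)) := ((2 ^ (d - 2) : ℕ) : ZMod (2 ^ (d - 1))) with hMdef
  -- arithmetic facts
  have h2M : 2 * M = 0 := by
    have h : (2:ℕ) * 2 ^ (d - 2) = 2 ^ (d - 1) := by
      rw [← pow_succ']; congr 1; omega
    calc 2 * M = ((2 * 2 ^ (d - 2) : ℕ) : ZMod (2 ^ (d - 1))) := by
          rw [hMdef]; push_cast; ring
      _ = 0 := by rw [h, ZMod.natCast_self]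
  have hMne : M ≠ 0 := by
    rw [hMdef, Ne, ZMod.natCast_eq_zero_iff]
    intro h
    have h1 := Nat.le_of_dvd (by positivity) h
    have h2 : (2:ℕ) ^ (d - 2) < 2 ^ (d - 1) := Nat.pow_lt_pow_right (by norm_num) (by omega)
    omega
  have h2ne : (2 : ZMod (2 ^ (d - 1))) ≠ 0 := by
    intro h
    have h' : ((2:ℕ) : ZMod (2 ^ (d - 1))) = 0 := by push_cast; exact h
    rw [ZMod.natCast_eq_zero_iff] at h'
    have h1 := Nat.le_of_dvd (by norm_num) h'
    have h2 : (2:ℕ) ^ 3 ≤ 2 ^ (d - 1) := Nat.pow_le_pow_right (by norm_num) (by omega)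
    omega
  have hMM : M * M = 0 := by
    rw [hMdef, ← Nat.cast_mul, ZMod.natCast_eq_zero_iff, ← pow_add]
    exact pow_dvd_pow 2 (by omega)
  have hcM : ∀ i : ZMod (2 ^ (d - 1)), 2 * i = M → M * i = 0 := by
    intro i h
    have hn3 : (2:ℕ) * 2 ^ (d - 3) = 2 ^ (d - 2) := by
      rw [← pow_succ']; congr 1; omega
    have hc : M = 2 * ((2 ^ (d - 3) : ℕ) : ZMod (2 ^ (d - 1))) := by
      rw [hMdef, ← hn3]; push_cast; ring
    have hcm : ((2 ^ (d - 3) : ℕ) : ZMod (2 ^ (d - 1))) * M = 0 := by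
      rw [hMdef, ← Nat.cast_mul, ZMod.natCast_eq_zero_iff, ← pow_add]
      exact pow_dvd_pow 2 (by omega)
    calc M * i = ((2 ^ (d - 3) : ℕ) : ZMod (2 ^ (d - 1))) * (2 * i) := by
          rw [hc]; ring
      _ = ((2 ^ (d - 3) : ℕ) : ZMod (2 ^ (d - 1))) * M := by rw [h]
      _ = 0 := hcm
  -- conjugation formulas
  have hr : ∀ i : ZMod (2 ^ (d - 1)), e * ι (r i) * e⁻¹ = ι (r ((M - 1) * i)) := by
    intro i
    rw [r_eq_pow i, map_pow, ← conj_pow, hs, ← map_pow]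
    congr 1
    rw [r_inv', r_mul_r, r_pow', ZMod.natCast_val, ZMod.cast_id, mul_comm]
    congr 1
    ring
  have hsr : ∀ i : ZMod (2 ^ (d - 1)),
      e * ι (sr i) * e⁻¹ = ι (sr ((M - 1) * i + 1)) := by
    intro i
    have hsri : (sr i : DihedralGroup (2 ^ (d - 1))) = r (-i) * sr 0 := by
      rw [r_mul_sr, zero_sub, neg_neg]
    rw [hsri, map_mul, show e * (ι (r (-i)) * ι (sr 0)) * e⁻¹ =
      (e * ι (r (-i)) * e⁻¹) * (e * ι (sr 0) * e⁻¹) by group, hr, ht, ← map_mul]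
    congr 1
    rw [r_inv', show (r ((M-1) * -i) : DihedralGroup (2^(d-1))) * (r (-1) * sr 0)
      = r ((M-1) * -i) * r (-1) * sr 0 by group, r_mul_r, r_mul_sr]
    congr 1
    ring
  -- e^2 lies in the range
  obtain ⟨x, hx⟩ := Subgroup.mul_self_mem_of_index_two hidx e
  -- conjugation by x = e^2
  have key : ∀ g : DihedralGroup (2 ^ (d - 1)),
      ι (x * g * x⁻¹) = e * (e * ι g * e⁻¹) * e⁻¹ := by
    intro g
    rw [map_mul, map_mul, map_inv, hx]
    group
  -- x is fixed by conjugation by e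
  have hfix : e * ι x * e⁻¹ = ι x := by rw [hx]; group
  -- x conjugates r 1 to r 1
  have hx1 : x * r 1 * x⁻¹ = r 1 := by
    apply hinj
    rw [key, hr 1, hr ((M-1)*1)]
    congr 2
    have hq : (M - 1) * ((M - 1) * 1) = M * M - 2 * M + 1 := by ring
    rw [hq, hMM, h2M]; ring
  -- x conjugates sr 0 to sr M
  have hx2 : x * sr 0 * x⁻¹ = sr M := by
    apply hinj
    rw [key, hsr 0, hsr ((M-1)*0 + 1)]
    congr 2
    ring
  -- case analysis on x
  rcases x with i | i
  · -- x = r i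
    rw [r_inv', r_mul_sr, zero_sub, sr_mul_r] at hx2
    have h2i : -i + -i = M := by injection hx2
    have hfix2 : ι (r ((M - 1) * i)) = ι (r i) := by rw [← hr i]; exact hfix
    have hfix3 := hinj hfix2
    have hfix' : (M - 1) * i = i := by injection hfix3
    have h2i' : 2 * i = M := by linear_combination -h2i - h2M
    have hMi : M * i = 0 := hcM i h2i'
    exact hMne (by linear_combination -hMi + hfix' - h2i)
  · -- x = sr i
    have hinv : (sr i : DihedralGroup (2 ^ (d - 1)))⁻¹ = sr i :=
      inv_eq_of_mul_eq_one_right (sr_mul_self i)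
    rw [hinv, sr_mul_r, sr_mul_sr] at hx1
    have h1 : i - (i + 1) = 1 := by injection hx1
    exact h2ne (by linear_combination -h1)
end
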